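/- arXiv:1311.0395 — 6 statements merged into one kernel-verified Lean document; each statement's English description precedes it below -/
import Mathlib

section
/- Let D be a finite subset of Z^d, let ξ: Z^d → R, and let H_{D,ξ} be the operator acting on functions f: D → R (with Dirichlet boundary condition, i.e., f extended by zero outside D) by (H_{D,ξ}f)(x) = Σ_{y: |y-x|=1} [f(y) - f(x)] + ξ(x)f(x). Let λ and ψ be an eigenvalue and corresponding eigenfunction of H_{D,ξ}. Let (Y_k) be the discrete-time simple symmetric random walk on Z^d, let τ := inf{k ≥ 0 : ξ(Y_k) ≥ λ or Y_k ∉ D}, and define M_0 := ψ(Y_0) and M_n := ψ(Y_n) · Π_{k=0}^{n-1} 2d/(2d + λ - ξ(Y_k)) for 1 ≤ n ≤ τ. Then under P^x for any x ∈ Z^d, the stopped process (M_{τ∧n})_{n≥0} is a martingale with respect to the canonical filtration of Y. -/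
open scoped BigOperators
open MeasureTheory

namespace RSO

abbrev Site (d : ℕ) := Fin d → ℤ

/-- ℓ¹ distance on ℤ^d. -/
def dist1 {d : ℕ} (x y : Site d) : ℕ := ∑ i, (x i - y i).natAbs

lemma dist1_comm {d : ℕ} (x y : Site d) : dist1 x y = dist1 y x :=
  Finset.sum_congr rfl fun i _ => by omega

/-- The Dirichlet Hamiltonian `Δ + ξ` on `D` as a matrix (Dirichlet b.c. outside `D`). -/
noncomputable def matH {d : ℕ} (D : Finset (Site d)) (ξ : Site d → ℝ) :
    Matrix D D ℝ := fun x y =>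
  (if dist1 (x : Site d) (y : Site d) = 1 then (1 : ℝ) else 0) +
    (if x = y then ξ (x : Site d) - 2 * d else 0)

lemma matH_isHermitian {d : ℕ} (D : Finset (Site d)) (ξ : Site d → ℝ) :
    (matH D ξ).IsHermitian := by
  ext x y
  simp only [matH, Matrix.conjTranspose_apply, star_add, star_one, star_zero]
  rw [dist1_comm]
  by_cases h : x = y <;> simp [h, eq_comm, star_trivial]

/-- `lambdaK D ξ k` is the `k`-th largest (1-indexed) eigenvalue of the Dirichlet
Hamiltonian `Δ + ξ` on `D` (junk value `0` if `k` is out of range). -/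
noncomputable def lambdaK {d : ℕ} (D : Finset (Site d)) (ξ : Site d → ℝ) (k : ℕ) : ℝ :=
  (List.insertionSort (fun a b : ℝ => b ≤ a)
      ((D.attach.val.map (matH_isHermitian D ξ).eigenvalues).toList)).getD (k - 1) 0

/-- The Dirichlet Hamiltonian applied to a function (with Dirichlet b.c.). -/
noncomputable def hamApply {d : ℕ} (D : Finset (Site d)) (ξ : Site d → ℝ)
    (f : Site d → ℝ) (x : Site d) : ℝ :=
  (∑ y ∈ D.filter (fun y => dist1 x y = 1), f y) + (ξ x - 2 * d) * f x

/-- `ψ` is an eigenfunction of `H_{D,ξ}` with eigenvalue `lam`. -/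
def IsEigen {d : ℕ} (D : Finset (Site d)) (ξ : Site d → ℝ) (lam : ℝ)
    (ψ : Site d → ℝ) : Prop :=
  (∀ x ∉ D, ψ x = 0) ∧ ψ ≠ 0 ∧ ∀ x ∈ D, hamApply D ξ ψ x = lam * ψ x

/-- The 2d nearest neighbours of a point of ℤ^d. -/
def nbhd {d : ℕ} (x : Site d) : Finset (Site d) :=
  Finset.univ.image fun p : Fin d × Bool =>
    Function.update x p.1 (x p.1 + if p.2 then 1 else -1)

lemma mem_nbhd_iff {d : ℕ} (x y : Site d) : y ∈ nbhd x ↔ dist1 x y = 1 := by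
  constructor
  · intro hy
    simp only [nbhd, Finset.mem_image, Finset.mem_univ, true_and] at hy
    obtain ⟨⟨i, b⟩, rfl⟩ := hy
    unfold dist1
    rw [Finset.sum_eq_single i]
    · cases b <;> simp [Function.update_self] <;> omega
    · intro j _ hj; simp [Function.update_apply, hj]
    · simp
  · intro h
    unfold dist1 at h
    have hne : ∃ i ∈ Finset.univ, (x i - y i).natAbs ≠ 0 := by
      by_contra hc
      push_neg at hc
      rw [Finset.sum_eq_zero (fun i hi => hc i hi)] at h
      exact one_ne_zero h.symm
    obtain ⟨i, _, hi⟩ := hne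
    have hle : (x i - y i).natAbs ≤ 1 :=
      h ▸ Finset.single_le_sum (f := fun j => (x j - y j).natAbs)
        (fun _ _ => Nat.zero_le _) (Finset.mem_univ i)
    have h1 : (x i - y i).natAbs = 1 := by omega
    have hrest : ∀ j, j ≠ i → x j = y j := by
      intro j hj
      have hsum : ∑ k ∈ Finset.univ.erase i, (x k - y k).natAbs = 0 := by
        have h2 : (x i - y i).natAbs + ∑ k ∈ Finset.univ.erase i, (x k - y k).natAbs
            = ∑ k, (x k - y k).natAbs := Finset.add_sum_erase _ (fun k => (x k - y k).natAbs) (Finset.mem_univ i)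
        omega
      have := Finset.sum_eq_zero_iff.mp hsum j (Finset.mem_erase.mpr ⟨hj, Finset.mem_univ j⟩)
      omega
    simp only [nbhd, Finset.mem_image, Finset.mem_univ, true_and]
    have hcases : y i = x i + 1 ∨ y i = x i + (-1) := by omega
    rcases hcases with hc | hc
    · exact ⟨⟨i, true⟩, funext fun j => by
        by_cases hj : j = i
        · subst hj; simp [Function.update_self, hc]
        · simp [Function.update_apply, hj, hrest j hj]⟩
    · exact ⟨⟨i, false⟩, funext fun j => by
        by_cases hj : j = i
        · subst hj; simp [Function.update_self, hc]
        · simp [Function.update_apply, hj, hrest j hj]⟩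


lemma sInf_eq_of_agree {n : ℕ} {S T : Set ℕ} (hS : n ∈ S) (hT : n ∈ T)
    (h : ∀ k ≤ n, (k ∈ S ↔ k ∈ T)) : sInf S = sInf T := by
  have h1 : sInf S ≤ n := Nat.sInf_le hS
  have h2 : sInf T ≤ n := Nat.sInf_le hT
  have hmS : sInf S ∈ S := Nat.sInf_mem ⟨n, hS⟩
  have hmT : sInf T ∈ T := Nat.sInf_mem ⟨n, hT⟩
  exact le_antisymm (Nat.sInf_le ((h _ h2).mpr hmT)) (Nat.sInf_le ((h _ h1).mp hmS))


lemma measurable_of_tuple {d : ℕ} {Ω : Type*} {m : MeasurableSpace Ω}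
    {n : ℕ} {Y : ℕ → Ω → Site d}
    (hY : ∀ k, k ≤ n → @Measurable Ω (Site d) m ⊤ (Y k))
    (F : (Fin (n+1) → Site d) → ℝ) :
    @Measurable Ω ℝ m _ (fun ω => F (fun k => Y k.1 ω)) := by
  have htup : @Measurable Ω (Fin (n+1) → Site d) m ⊤ (fun ω k => Y k.1 ω) := by
    intro s _
    have hset : (fun ω (k : Fin (n+1)) => Y k.1 ω) ⁻¹' s
        = ⋃ v ∈ s, ⋂ k : Fin (n+1), (Y k.1) ⁻¹' {v k} := by
      ext ω
      simp only [Set.mem_preimage, Set.mem_iUnion, Set.mem_iInter, Set.mem_singleton_iff]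
      constructor
      · intro h; exact ⟨_, h, fun k => rfl⟩
      · rintro ⟨v, hv, hvk⟩
        have : (fun k : Fin (n+1) => Y k.1 ω) = v := funext hvk
        rwa [this]
    rw [hset]
    exact MeasurableSet.biUnion s.to_countable (fun v _ =>
      MeasurableSet.iInter fun k => hY k.1 (Nat.lt_succ_iff.mp k.2) MeasurableSpace.measurableSet_top)
  exact (measurable_from_top (f := F)).comp htup

lemma sum_nbhd {d : ℕ} {D : Finset (Site d)} {ξ : Site d → ℝ} {lam : ℝ} {ψ : Site d → ℝ}
    (hψ0 : ∀ z ∉ D, ψ z = 0) (heig : ∀ x ∈ D, hamApply D ξ ψ x = lam * ψ x)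
    {x : Site d} (hx : x ∈ D) :
    ∑ y ∈ nbhd x, ψ y = (2 * d + lam - ξ x) * ψ x := by
  classical
  have h1 : ∑ y ∈ (nbhd x).filter (· ∈ D), ψ y = ∑ y ∈ nbhd x, ψ y :=
    Finset.sum_filter_of_ne (fun y _ hy => by by_contra hyD; exact hy (hψ0 y hyD))
  have h2 : (nbhd x).filter (· ∈ D) = D.filter (fun y => dist1 x y = 1) := by
    ext y
    simp only [Finset.mem_filter, mem_nbhd_iff]
    tauto
  have h3 := heig x hx
  unfold hamApply at h3
  rw [← h1, h2]
  linear_combination h3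

set_option maxHeartbeats 2000000 in
/-- Lemma 4.1: for an eigenvalue/eigenfunction pair `(λ, ψ)` of
`H_{D,ξ}` and a simple symmetric random walk `Y` started at `x`, the stopped process
`M_{τ∧n} = ψ(Y_{τ∧n}) Π_{j<τ∧n} 2d/(2d+λ-ξ(Y_j))` (with
`τ = inf{k : ξ(Y_k) ≥ λ or Y_k ∉ D}`) is a martingale for the canonical filtration. -/
theorem stopped_process_martingale {d : ℕ} (hd : 0 < d)
    {Ω : Type*} [m0 : MeasurableSpace Ω] (μ : MeasureTheory.Measure Ω)
    [MeasureTheory.IsProbabilityMeasure μ]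
    (ℱ : MeasureTheory.Filtration ℕ m0)
    (Y : ℕ → Ω → Site d) (x : Site d)
    (hY0 : ∀ᵐ ω ∂μ, Y 0 ω = x)
    (hnat : ∀ n, (ℱ n : MeasurableSpace Ω) =
      ⨆ k ∈ Set.Iic n, MeasurableSpace.comap (Y k) ⊤)
    (hMarkov : ∀ (n : ℕ) (g : Site d → ℝ),
      μ[fun ω => g (Y (n + 1) ω)|ℱ n] =ᵐ[μ]
        fun ω => (∑ y ∈ nbhd (Y n ω), g y) / (2 * d))
    (D : Finset (Site d)) (ξ : Site d → ℝ) (lam : ℝ) (ψ : Site d → ℝ)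
    (hψ : IsEigen D ξ lam ψ) :
    MeasureTheory.Martingale
      (fun (n : ℕ) (ω : Ω) =>
        let m := sInf {k : ℕ | k = n ∨ lam ≤ ξ (Y k ω) ∨ Y k ω ∉ D}
        ψ (Y m ω) * ∏ j ∈ Finset.range m, (2 * d) / (2 * d + lam - ξ (Y j ω)))
      ℱ μ := by
  classical
  obtain ⟨hψ0, -, heig⟩ := hψ
  -- abbreviations
  set mm : ℕ → Ω → ℕ :=
    fun n ω => sInf {k : ℕ | k = n ∨ lam ≤ ξ (Y k ω) ∨ Y k ω ∉ D} with hmm_def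
  set M : ℕ → Ω → ℝ := fun n ω =>
    ψ (Y (mm n ω) ω) * ∏ j ∈ Finset.range (mm n ω),
      (2 * d) / (2 * d + lam - ξ (Y j ω)) with hM_def
  suffices hMart : Martingale M ℱ μ by exact hMart
  -- basic numeric facts
  have hd2 : (0:ℝ) < 2 * d := by
    have : (1:ℝ) ≤ d := by exact_mod_cast hd
    linarith
  -- bound on ψ
  set B : ℝ := ∑ y ∈ D, |ψ y| with hB_def
  have hB0 : 0 ≤ B := Finset.sum_nonneg fun y _ => abs_nonneg _
  have hB : ∀ z, |ψ z| ≤ B := by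
    intro z
    by_cases hz : z ∈ D
    · exact Finset.single_le_sum (fun y _ => abs_nonneg (ψ y)) hz
    · rw [hψ0 z hz, abs_zero]; exact hB0
  -- facts about mm
  have hmle : ∀ n ω, mm n ω ≤ n := fun n ω => Nat.sInf_le (Or.inl rfl)
  have hgoodfac : ∀ (ω : Ω) (j : ℕ), ¬(lam ≤ ξ (Y j ω) ∨ Y j ω ∉ D) →
      0 < (2 * (d:ℝ)) / (2 * d + lam - ξ (Y j ω)) ∧
      (2 * (d:ℝ)) / (2 * d + lam - ξ (Y j ω)) ≤ 1 := by
    intro ω j hj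
    simp only [not_or, not_le, not_not] at hj
    have hden : 0 < 2 * (d:ℝ) + lam - ξ (Y j ω) := by linarith [hj.1]
    exact ⟨div_pos hd2 hden, (div_le_one hden).mpr (by linarith [hj.1])⟩
  have hgood : ∀ n ω j, j < mm n ω → ¬(lam ≤ ξ (Y j ω) ∨ Y j ω ∉ D) := by
    intro n ω j hj
    have hnm : j ∉ {k : ℕ | k = n ∨ lam ≤ ξ (Y k ω) ∨ Y k ω ∉ D} :=
      Nat.notMem_of_lt_sInf hj
    simp only [Set.mem_setOf_eq, not_or] at hnm
    exact fun hc => hc.elim (fun h => hnm.2.1 h) (fun h => hnm.2.2 h)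
  have hmm_eq : ∀ (N : ℕ) (ω : Ω),
      (∀ k < N, ¬(lam ≤ ξ (Y k ω) ∨ Y k ω ∉ D)) → mm N ω = N := by
    intro N ω h
    refine le_antisymm (hmle N ω) (le_of_not_gt fun hlt => ?_)
    have hmem : mm N ω ∈ {k : ℕ | k = N ∨ lam ≤ ξ (Y k ω) ∨ Y k ω ∉ D} :=
      Nat.sInf_mem ⟨N, Or.inl rfl⟩
    rcases hmem with h1 | h2
    · omega
    · exact h _ hlt h2
  -- product bounds
  have hprod01 : ∀ n ω, 0 ≤ (∏ j ∈ Finset.range (mm n ω),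
        (2 * (d:ℝ)) / (2 * d + lam - ξ (Y j ω))) ∧
      (∏ j ∈ Finset.range (mm n ω), (2 * (d:ℝ)) / (2 * d + lam - ξ (Y j ω))) ≤ 1 := by
    intro n ω
    constructor
    · exact Finset.prod_nonneg fun j hj =>
        (hgoodfac ω j (hgood n ω j (Finset.mem_range.mp hj))).1.le
    · exact Finset.prod_le_one
        (fun j hj => (hgoodfac ω j (hgood n ω j (Finset.mem_range.mp hj))).1.le)
        (fun j hj => (hgoodfac ω j (hgood n ω j (Finset.mem_range.mp hj))).2)
  have hMbd : ∀ n ω, |M n ω| ≤ B := by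
    intro n ω
    rw [hM_def]
    simp only []
    rw [abs_mul]
    calc |ψ (Y (mm n ω) ω)| * |∏ j ∈ Finset.range (mm n ω),
          (2 * (d:ℝ)) / (2 * d + lam - ξ (Y j ω))|
        ≤ B * 1 := by
          apply mul_le_mul (hB _) _ (abs_nonneg _) hB0
          rw [abs_of_nonneg (hprod01 n ω).1]
          exact (hprod01 n ω).2
      _ = B := mul_one B
  -- measurability of Y k w.r.t. ℱ n
  have hYmeas : ∀ n k, k ≤ n → @Measurable Ω (Site d) (ℱ n) ⊤ (Y k) := by
    intro n k hk
    rw [measurable_iff_comap_le, hnat n]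
    exact le_biSup (fun k => MeasurableSpace.comap (Y k) ⊤) hk
  have hkey : ∀ (n : ℕ) (G : (ℕ → Site d) → ℝ),
      @Measurable Ω ℝ (ℱ n) _ (fun ω => G (fun k => Y (min k n) ω)) := by
    intro n G
    exact measurable_of_tuple (fun k hk => hYmeas n k hk)
      (fun v => G (fun k => v ⟨min k n, Nat.lt_succ_of_le (min_le_right k n)⟩))
  have hmin_sInf : ∀ n ω,
      sInf {k : ℕ | k = n ∨ lam ≤ ξ (Y (min k n) ω) ∨ Y (min k n) ω ∉ D} = mm n ω := by
    intro n ω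
    refine sInf_eq_of_agree (Or.inl rfl) (Or.inl rfl) ?_
    intro k hk
    rw [Set.mem_setOf_eq, Set.mem_setOf_eq, min_eq_left hk]
  have hMmeas : ∀ n, @Measurable Ω ℝ (ℱ n) _ (M n) := by
    intro n
    have heq : M n = fun ω =>
        (fun w : ℕ → Site d =>
          ψ (w (sInf {k : ℕ | k = n ∨ lam ≤ ξ (w k) ∨ w k ∉ D})) *
            ∏ j ∈ Finset.range (sInf {k : ℕ | k = n ∨ lam ≤ ξ (w k) ∨ w k ∉ D}),
              (2 * d) / (2 * d + lam - ξ (w j)))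
          (fun k => Y (min k n) ω) := by
      funext ω
      simp only []
      rw [hmin_sInf n ω, min_eq_left (hmle n ω), hM_def]
      refine congrArg _ (Finset.prod_congr rfl fun j hj => ?_)
      rw [min_eq_left (le_trans (Nat.le_of_lt_succ (Nat.lt_succ_of_lt
        (Finset.mem_range.mp hj))) (hmle n ω))]
    rw [heq]
    exact hkey n (fun w : ℕ → Site d =>
          ψ (w (sInf {k : ℕ | k = n ∨ lam ≤ ξ (w k) ∨ w k ∉ D})) *
            ∏ j ∈ Finset.range (sInf {k : ℕ | k = n ∨ lam ≤ ξ (w k) ∨ w k ∉ D}),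
              (2 * d) / (2 * d + lam - ξ (w j)))
  -- the W and U processes
  set Wf : ℕ → Ω → ℝ := fun n ω =>
    if ∀ k ≤ n, ¬(lam ≤ ξ (Y k ω) ∨ Y k ω ∉ D)
    then ∏ j ∈ Finset.range (n+1), (2 * d) / (2 * d + lam - ξ (Y j ω)) else 0 with hWf_def
  set Uf : ℕ → Ω → ℝ := fun n ω =>
    if ∀ k ≤ n, ¬(lam ≤ ξ (Y k ω) ∨ Y k ω ∉ D) then 0 else M n ω with hUf_def
  have hcond_iff : ∀ n ω, (∀ k ≤ n, ¬(lam ≤ ξ (Y (min k n) ω) ∨ Y (min k n) ω ∉ D)) ↔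
      (∀ k ≤ n, ¬(lam ≤ ξ (Y k ω) ∨ Y k ω ∉ D)) :=
    fun n ω => forall₂_congr fun k hk => by rw [min_eq_left hk]
  have hWmeas : ∀ n, @Measurable Ω ℝ (ℱ n) _ (Wf n) := by
    intro n
    have heq : Wf n = fun ω => (fun w : ℕ → Site d =>
        if ∀ k ≤ n, ¬(lam ≤ ξ (w k) ∨ w k ∉ D)
        then ∏ j ∈ Finset.range (n+1), (2 * d) / (2 * d + lam - ξ (w j)) else 0)
        (fun k => Y (min k n) ω) := by
      funext ω
      simp only [hWf_def]
      have hp : (∏ j ∈ Finset.range (n+1), (2 * (d:ℝ)) / (2 * d + lam - ξ (Y (min j n) ω)))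
          = ∏ j ∈ Finset.range (n+1), (2 * (d:ℝ)) / (2 * d + lam - ξ (Y j ω)) :=
        Finset.prod_congr rfl fun j hj => by
          rw [min_eq_left (Nat.lt_succ_iff.mp (Finset.mem_range.mp hj))]
      exact (if_congr (hcond_iff n ω) hp rfl).symm
    rw [heq]
    exact hkey n (fun w : ℕ → Site d =>
        if ∀ k ≤ n, ¬(lam ≤ ξ (w k) ∨ w k ∉ D)
        then ∏ j ∈ Finset.range (n+1), (2 * d) / (2 * d + lam - ξ (w j)) else 0)
  have hUmeas : ∀ n, @Measurable Ω ℝ (ℱ n) _ (Uf n) := by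
    intro n
    have heqM : M n = fun ω =>
        (fun w : ℕ → Site d =>
          ψ (w (sInf {k : ℕ | k = n ∨ lam ≤ ξ (w k) ∨ w k ∉ D})) *
            ∏ j ∈ Finset.range (sInf {k : ℕ | k = n ∨ lam ≤ ξ (w k) ∨ w k ∉ D}),
              (2 * d) / (2 * d + lam - ξ (w j)))
          (fun k => Y (min k n) ω) := by
      funext ω
      simp only []
      rw [hmin_sInf n ω, min_eq_left (hmle n ω), hM_def]
      refine congrArg _ (Finset.prod_congr rfl fun j hj => ?_)
      rw [min_eq_left (le_trans (Nat.le_of_lt_succ (Nat.lt_succ_of_lt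
        (Finset.mem_range.mp hj))) (hmle n ω))]
    have heq : Uf n = fun ω => (fun w : ℕ → Site d =>
        if ∀ k ≤ n, ¬(lam ≤ ξ (w k) ∨ w k ∉ D) then 0 else
          ψ (w (sInf {k : ℕ | k = n ∨ lam ≤ ξ (w k) ∨ w k ∉ D})) *
            ∏ j ∈ Finset.range (sInf {k : ℕ | k = n ∨ lam ≤ ξ (w k) ∨ w k ∉ D}),
              (2 * d) / (2 * d + lam - ξ (w j)))
        (fun k => Y (min k n) ω) := by
      funext ω
      simp only [hUf_def]
      exact (if_congr (hcond_iff n ω) rfl (congrFun heqM ω).symm).symm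
    rw [heq]
    exact hkey n (fun w : ℕ → Site d =>
        if ∀ k ≤ n, ¬(lam ≤ ξ (w k) ∨ w k ∉ D) then 0 else
          ψ (w (sInf {k : ℕ | k = n ∨ lam ≤ ξ (w k) ∨ w k ∉ D})) *
            ∏ j ∈ Finset.range (sInf {k : ℕ | k = n ∨ lam ≤ ξ (w k) ∨ w k ∉ D}),
              (2 * d) / (2 * d + lam - ξ (w j)))
  -- bounds for W and U
  have hWbd : ∀ n ω, |Wf n ω| ≤ 1 := by
    intro n ω
    simp only [hWf_def]
    split_ifs with h
    · rw [abs_of_nonneg (Finset.prod_nonneg fun j hj =>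
        (hgoodfac ω j (h j (Nat.lt_succ_iff.mp (Finset.mem_range.mp hj)))).1.le)]
      exact Finset.prod_le_one
        (fun j hj => (hgoodfac ω j (h j (Nat.lt_succ_iff.mp (Finset.mem_range.mp hj)))).1.le)
        (fun j hj => (hgoodfac ω j (h j (Nat.lt_succ_iff.mp (Finset.mem_range.mp hj)))).2)
    · simp
  have hUbd : ∀ n ω, |Uf n ω| ≤ B := by
    intro n ω
    simp only [hUf_def]
    split_ifs with h
    · simpa using hB0
    · exact hMbd n ω
  -- integrability helper
  have hbddInt : ∀ (f : Ω → ℝ) (c : ℝ), AEStronglyMeasurable f μ →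
      (∀ ω, |f ω| ≤ c) → Integrable f μ := fun f c hm hb =>
    Integrable.mono' (integrable_const c) hm
      (ae_of_all μ fun ω => by simpa [Real.norm_eq_abs] using hb ω)
  have hMint : ∀ n, Integrable (M n) μ := fun n =>
    hbddInt (M n) B ((hMmeas n).mono (ℱ.le n) le_rfl).aestronglyMeasurable (hMbd n)
  have hψYmeas : ∀ k, Measurable fun ω => ψ (Y k ω) := fun k =>
    (measurable_from_top (f := ψ)).comp ((hYmeas k k le_rfl).mono (ℱ.le k) le_rfl)
  -- decomposition of M (n+1)
  have hdecomp : ∀ n, M (n+1) = Wf n * (fun ω => ψ (Y (n+1) ω)) + Uf n := by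
    intro n
    funext ω
    show M (n+1) ω = Wf n ω * ψ (Y (n+1) ω) + Uf n ω
    by_cases h : ∀ k ≤ n, ¬(lam ≤ ξ (Y k ω) ∨ Y k ω ∉ D)
    · have h1 : mm (n+1) ω = n+1 :=
        hmm_eq (n+1) ω (fun k hk => h k (Nat.lt_succ_iff.mp hk))
      simp only [hWf_def, hUf_def, if_pos h, hM_def, h1]
      ring
    · have hne : ∃ k, k ≤ n ∧ (lam ≤ ξ (Y k ω) ∨ Y k ω ∉ D) := by
        push_neg at h
        obtain ⟨k, hk1, hk2⟩ := h
        exact ⟨k, hk1, hk2⟩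
      obtain ⟨k0, hk0n, hk0⟩ := hne
      have hTne : {k : ℕ | lam ≤ ξ (Y k ω) ∨ Y k ω ∉ D}.Nonempty := ⟨k0, hk0⟩
      set t := sInf {k : ℕ | lam ≤ ξ (Y k ω) ∨ Y k ω ∉ D} with ht_def
      have htmem : lam ≤ ξ (Y t ω) ∨ Y t ω ∉ D := Nat.sInf_mem hTne
      have htle : t ≤ n := le_trans (Nat.sInf_le hk0) hk0n
      have hmmn : ∀ N, t ≤ N → mm N ω = t := by
        intro N htN
        refine le_antisymm (Nat.sInf_le (Or.inr htmem)) ?_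
        have hmem : mm N ω ∈ {k : ℕ | k = N ∨ lam ≤ ξ (Y k ω) ∨ Y k ω ∉ D} :=
          Nat.sInf_mem ⟨N, Or.inl rfl⟩
        rcases hmem with h1 | h2
        · omega
        · exact Nat.sInf_le h2
      have h2 : mm (n+1) ω = mm n ω := by
        rw [hmmn (n+1) (by omega), hmmn n htle]
      simp only [hWf_def, hUf_def, if_neg h, hM_def, h2]
      ring
  -- one-step conditional expectation
  have hstep : ∀ n, M n =ᵐ[μ] μ[M (n+1) | ℱ n] := by
    intro n
    have hWsm : StronglyMeasurable[ℱ n] (Wf n) := (hWmeas n).stronglyMeasurable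
    have hUsm : StronglyMeasurable[ℱ n] (Uf n) := (hUmeas n).stronglyMeasurable
    have hgint : Integrable (fun ω => ψ (Y (n+1) ω)) μ :=
      hbddInt _ B (hψYmeas (n+1)).aestronglyMeasurable (fun ω => hB _)
    have hWg : Integrable (Wf n * fun ω => ψ (Y (n+1) ω)) μ := by
      refine hbddInt _ B ?_ ?_
      · exact (((hWmeas n).mono (ℱ.le n) le_rfl).mul (hψYmeas (n+1))).aestronglyMeasurable
      · intro ω
        calc |Wf n ω * ψ (Y (n+1) ω)| = |Wf n ω| * |ψ (Y (n+1) ω)| := abs_mul _ _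
          _ ≤ 1 * B := mul_le_mul (hWbd n ω) (hB _) (abs_nonneg _) zero_le_one
          _ = B := one_mul B
    have hUint : Integrable (Uf n) μ :=
      hbddInt _ B ((hUmeas n).mono (ℱ.le n) le_rfl).aestronglyMeasurable (hUbd n)
    have e1 : μ[M (n+1) | ℱ n] =ᵐ[μ]
        μ[Wf n * (fun ω => ψ (Y (n+1) ω)) | ℱ n] + μ[Uf n | ℱ n] := by
      rw [hdecomp n]
      exact condExp_add hWg hUint _
    have e2 : μ[Wf n * (fun ω => ψ (Y (n+1) ω)) | ℱ n] =ᵐ[μ]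
        Wf n * μ[(fun ω => ψ (Y (n+1) ω)) | ℱ n] :=
      condExp_mul_of_stronglyMeasurable_left hWsm hWg hgint
    have e3 : μ[Uf n | ℱ n] = Uf n :=
      condExp_of_stronglyMeasurable (ℱ.le n) hUsm hUint
    have e4 := hMarkov n ψ
    have efin : μ[M (n+1) | ℱ n] =ᵐ[μ]
        Wf n * (fun ω => (∑ y ∈ nbhd (Y n ω), ψ y) / (2 * d)) + Uf n := by
      refine e1.trans ?_
      rw [e3]
      exact Filter.EventuallyEq.add
        (e2.trans (Filter.EventuallyEq.mul (Filter.EventuallyEq.refl _ _) e4))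
        (Filter.EventuallyEq.refl _ _)
    refine Filter.EventuallyEq.symm (efin.trans (Filter.EventuallyEq.of_eq ?_))
    funext ω
    show Wf n ω * ((∑ y ∈ nbhd (Y n ω), ψ y) / (2 * d)) + Uf n ω = M n ω
    by_cases h : ∀ k ≤ n, ¬(lam ≤ ξ (Y k ω) ∨ Y k ω ∉ D)
    · have hn := h n le_rfl
      simp only [not_or, not_le, not_not] at hn
      have hsum := sum_nbhd hψ0 heig hn.2
      have hmn : mm n ω = n := hmm_eq n ω (fun k hk => h k hk.le)
      simp only [hWf_def, hUf_def, if_pos h, hM_def, hmn, hsum]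
      rw [Finset.prod_range_succ, add_zero, mul_assoc]
      have hden : (0:ℝ) < 2 * d + lam - ξ (Y n ω) := by linarith [hn.1]
      have hkey2 : 2 * (d:ℝ) / (2 * (d:ℝ) + lam - ξ (Y n ω)) *
          ((2 * (d:ℝ) + lam - ξ (Y n ω)) * ψ (Y n ω) / (2 * (d:ℝ))) = ψ (Y n ω) := by
        field_simp
      rw [hkey2]
      ring
    · simp only [hWf_def, hUf_def, if_neg h]
      ring
  exact martingale_nat (fun n => (hMmeas n).stronglyMeasurable) hMint hstep

end RSO
end

section
/- Let D ⊂ Z^d be finite, let ξ: D → R, and let λ, ψ be an eigenvalue and corresponding eigenfunction of the Dirichlet operator H_{D,ξ} = Δ + ξ on D. Let A' ≥ A > 0 and R ∈ N, and suppose D' ⊆ D satisfies: (i) ξ(x) ≤ λ - A' for all x ∈ D', and (ii) whenever x ∈ D and ξ(x) ≥ λ - A, then dist(x, D') ≥ R (in ℓ^1 distance). Then Σ_{x∈D'} |ψ(x)|² ≤ (1 + A/(2d))^{2-2R} (1 + A'/(2d))^{-2} ‖ψ‖₂². -/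
open scoped BigOperators
open MeasureTheory

namespace RSO

/-! ### Auxiliary lemmas for the proof of `mass_bound` -/

/-- The neighbor of `x` in direction `p.1`, sign `p.2`. -/
def nbr {d : ℕ} (x : Site d) (p : Fin d × Bool) : Site d :=
  Function.update x p.1 (x p.1 + if p.2 then 1 else -1)

lemma nbr_apply_same {d : ℕ} (x : Site d) (p : Fin d × Bool) :
    nbr x p p.1 = x p.1 + if p.2 then 1 else -1 := by
  simp [nbr]

lemma nbr_apply_ne {d : ℕ} (x : Site d) (p : Fin d × Bool) {j : Fin d} (hj : j ≠ p.1) :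
    nbr x p j = x j := by
  simp [nbr, Function.update_of_ne hj]

lemma dist1_nbr {d : ℕ} (x : Site d) (p : Fin d × Bool) : dist1 x (nbr x p) = 1 := by
  unfold dist1
  rw [Finset.sum_eq_single p.1]
  · rw [nbr_apply_same]; cases p.2 <;> simp
  · intro j _ hj
    rw [nbr_apply_ne x p hj]; omega
  · intro h; exact absurd (Finset.mem_univ _) h

lemma exists_nbr {d : ℕ} {x y : Site d} (h : dist1 x y = 1) : ∃ p, y = nbr x p := by
  unfold dist1 at h
  have hne : ∃ i : Fin d, (x i - y i).natAbs ≠ 0 := by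
    by_contra hc
    push_neg at hc
    rw [Finset.sum_eq_zero (fun i _ => hc i)] at h
    omega
  obtain ⟨i, hi⟩ := hne
  have hone : (x i - y i).natAbs = 1 := by
    have h1 : (x i - y i).natAbs ≤ ∑ j, (x j - y j).natAbs :=
      Finset.single_le_sum (f := fun j => (x j - y j).natAbs)
        (fun j _ => Nat.zero_le _) (Finset.mem_univ i)
    omega
  have hrest : ∀ j, j ≠ i → (x j - y j).natAbs = 0 := by
    intro j hj
    have hpair : (x i - y i).natAbs + (x j - y j).natAbs ≤ ∑ k, (x k - y k).natAbs := by
      have h2 : ∑ k ∈ ({i, j} : Finset (Fin d)), (x k - y k).natAbs ≤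
          ∑ k, (x k - y k).natAbs :=
        Finset.sum_le_sum_of_subset (Finset.subset_univ _)
      rwa [Finset.sum_pair (Ne.symm hj)] at h2
    omega
  refine ⟨(i, decide (x i < y i)), funext fun j => ?_⟩
  by_cases hj : j = i
  · subst hj
    rw [nbr_apply_same]
    simp only
    by_cases hlt : x j < y j <;> simp [hlt] <;> omega
  · rw [nbr_apply_ne x _ hj]
    have := hrest j hj
    omega

lemma nbr_left_injective {d : ℕ} (p : Fin d × Bool) :
    Function.Injective (fun x : Site d => nbr x p) := by
  intro x y hxy
  simp only at hxy
  funext j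
  by_cases hj : j = p.1
  · subst hj
    have h1 := congrFun hxy p.1
    rw [nbr_apply_same, nbr_apply_same] at h1
    omega
  · have h1 := congrFun hxy j
    rwa [nbr_apply_ne x p hj, nbr_apply_ne y p hj] at h1

lemma nbr_right_injective {d : ℕ} (x : Site d) : Function.Injective (nbr x) := by
  intro p q h
  have hp1 : p.1 = q.1 := by
    by_contra hne
    have e1 := congrFun h p.1
    rw [nbr_apply_same, nbr_apply_ne x q hne] at e1
    cases hb : p.2 <;> rw [hb] at e1 <;> simp at e1 <;> omega
  have e1 := congrFun h p.1
  rw [nbr_apply_same, hp1, nbr_apply_same] at e1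
  have hb : p.2 = q.2 := by
    cases hp2 : p.2 <;> cases hq2 : q.2 <;> rw [hp2, hq2] at e1 <;> norm_num at e1 <;>
      first | rfl | omega
  exact Prod.ext hp1 hb

lemma sum_nbr_image {d : ℕ} (p : Fin d × Bool) (S : Finset (Site d)) (f : Site d → ℝ) :
    ∑ x ∈ S, f (nbr x p) = ∑ y ∈ S.image (fun x => nbr x p), f y :=
  (Finset.sum_image (fun a _ b _ hab => nbr_left_injective p hab)).symm

lemma card_univ_pairs (d : ℕ) :
    (((Finset.univ : Finset (Fin d × Bool)).card : ℕ) : ℝ) = 2 * d := by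
  rw [Finset.card_univ, Fintype.card_prod, Fintype.card_fin, Fintype.card_bool]
  push_cast; ring

/-- Summing a function vanishing outside `D` over the neighbors of `x` inside `D` equals
the sum over all `2d` lattice neighbors. -/
lemma sum_filter_nbr {d : ℕ} (D : Finset (Site d)) (x : Site d) (f : Site d → ℝ)
    (hf : ∀ z ∉ D, f z = 0) :
    ∑ y ∈ D.filter (fun y => dist1 x y = 1), f y = ∑ p : Fin d × Bool, f (nbr x p) := by
  classical
  rw [← Finset.sum_image (fun p _ q _ hpq => nbr_right_injective x hpq)]
  apply Finset.sum_subset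
  · intro y hy
    rw [Finset.mem_filter] at hy
    obtain ⟨p, hp⟩ := exists_nbr hy.2
    exact Finset.mem_image.mpr ⟨p, Finset.mem_univ p, hp.symm⟩
  · intro y hy hyn
    apply hf
    intro hyD
    obtain ⟨p, _, hp⟩ := Finset.mem_image.mp hy
    exact hyn (Finset.mem_filter.mpr ⟨hyD, hp ▸ dist1_nbr x p⟩)

lemma dist1_triangle {d : ℕ} (x y z : Site d) : dist1 x z ≤ dist1 x y + dist1 y z := by
  unfold dist1
  rw [← Finset.sum_add_distrib]
  exact Finset.sum_le_sum fun i _ => by omega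

/-- Pointwise bound from the eigenvalue equation. -/
lemma point_bound {d : ℕ} (hd : 0 < d) (D : Finset (Site d)) (ξ : Site d → ℝ)
    (lam : ℝ) (ψ : Site d → ℝ) (hψ0 : ∀ x ∉ D, ψ x = 0)
    (hEig : ∀ x ∈ D, hamApply D ξ ψ x = lam * ψ x)
    (B : ℝ) (hB : 0 < B) (x : Site d) (hx : x ∈ D) (hξ : ξ x ≤ lam - B) :
    ψ x ^ 2 ≤ (2 * d) / (2 * d + B) ^ 2 * ∑ p : Fin d × Bool, ψ (nbr x p) ^ 2 := by
  have hd2 : (0:ℝ) < 2 * d := by positivity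
  have heq := hEig x hx
  unfold hamApply at heq
  rw [sum_filter_nbr D x ψ hψ0] at heq
  set S := ∑ p : Fin d × Bool, ψ (nbr x p) with hS
  have hc : S = (lam - ξ x + 2 * d) * ψ x := by linarith
  have hCS : S ^ 2 ≤ (2 * d) * ∑ p : Fin d × Bool, ψ (nbr x p) ^ 2 := by
    have := sq_sum_le_card_mul_sum_sq (s := (Finset.univ : Finset (Fin d × Bool)))
      (f := fun p => ψ (nbr x p))
    rw [hS]
    calc (∑ p : Fin d × Bool, ψ (nbr x p)) ^ 2
        ≤ ((Finset.univ : Finset (Fin d × Bool)).card : ℝ) *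
            ∑ p : Fin d × Bool, ψ (nbr x p) ^ 2 := by exact_mod_cast this
      _ = (2 * d) * ∑ p : Fin d × Bool, ψ (nbr x p) ^ 2 := by rw [card_univ_pairs]
  have hcge : 2 * d + B ≤ lam - ξ x + 2 * d := by linarith
  have hc2 : ψ x ^ 2 * (2 * d + B) ^ 2 ≤ S ^ 2 := by
    rw [hc]
    have h1 : (2 * d + B) ^ 2 ≤ (lam - ξ x + 2 * d) ^ 2 := by nlinarith
    nlinarith [sq_nonneg (ψ x)]
  have hpos : (0:ℝ) < (2 * d + B) ^ 2 := by positivity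
  rw [div_mul_eq_mul_div, le_div_iff₀ hpos]
  calc ψ x ^ 2 * (2 * d + B) ^ 2 ≤ S ^ 2 := hc2
    _ ≤ 2 * d * ∑ p : Fin d × Bool, ψ (nbr x p) ^ 2 := hCS

/-- One step of the iteration: mass on `S` is bounded by the mass on a neighborhood `T`. -/
lemma region_step {d : ℕ} (hd : 0 < d) (D : Finset (Site d)) (ξ : Site d → ℝ)
    (lam : ℝ) (ψ : Site d → ℝ) (hψ0 : ∀ x ∉ D, ψ x = 0)
    (hEig : ∀ x ∈ D, hamApply D ξ ψ x = lam * ψ x)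
    (B : ℝ) (hB : 0 < B) (S T : Finset (Site d)) (hSD : S ⊆ D)
    (hξS : ∀ x ∈ S, ξ x ≤ lam - B)
    (hT : ∀ x ∈ S, ∀ y, dist1 x y = 1 → y ∈ D → y ∈ T) :
    ∑ x ∈ S, ψ x ^ 2 ≤ ((2 * d) / (2 * d + B)) ^ 2 * ∑ y ∈ T, ψ y ^ 2 := by
  classical
  have hd2 : (0:ℝ) < 2 * d := by positivity
  have hBd : (0:ℝ) < 2 * d + B := by linarith
  have step1 : ∑ x ∈ S, ψ x ^ 2 ≤
      (2 * d) / (2 * d + B) ^ 2 * ∑ x ∈ S, ∑ p : Fin d × Bool, ψ (nbr x p) ^ 2 := by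
    rw [Finset.mul_sum]
    exact Finset.sum_le_sum fun x hx =>
      point_bound hd D ξ lam ψ hψ0 hEig B hB x (hSD hx) (hξS x hx)
  have step2 : ∑ x ∈ S, ∑ p : Fin d × Bool, ψ (nbr x p) ^ 2 ≤
      (2 * d) * ∑ y ∈ T, ψ y ^ 2 := by
    rw [Finset.sum_comm]
    calc ∑ p : Fin d × Bool, ∑ x ∈ S, ψ (nbr x p) ^ 2
        ≤ ∑ _p : Fin d × Bool, ∑ y ∈ T, ψ y ^ 2 := by
          apply Finset.sum_le_sum
          intro p _
          calc ∑ x ∈ S, ψ (nbr x p) ^ 2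
              = ∑ y ∈ S.image (fun x => nbr x p), ψ y ^ 2 :=
                sum_nbr_image p S (fun y => ψ y ^ 2)
            _ ≤ ∑ y ∈ T, ψ y ^ 2 := by
                rw [← Finset.sum_filter_add_sum_filter_not (S.image (fun x => nbr x p))
                  (fun y => y ∈ D) (fun y => ψ y ^ 2)]
                have hz : ∑ y ∈ (S.image (fun x => nbr x p)).filter (fun y => ¬ y ∈ D),
                    ψ y ^ 2 = 0 := by
                  apply Finset.sum_eq_zero
                  intro y hy
                  rw [Finset.mem_filter] at hy
                  rw [hψ0 y hy.2]; ring
                rw [hz, add_zero]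
                apply Finset.sum_le_sum_of_subset_of_nonneg
                · intro y hy
                  rw [Finset.mem_filter, Finset.mem_image] at hy
                  obtain ⟨⟨x, hxS, hxy⟩, hyD⟩ := hy
                  exact hT x hxS y (hxy ▸ dist1_nbr x p) hyD
                · intro y _ _; positivity
      _ = (2 * d) * ∑ y ∈ T, ψ y ^ 2 := by
          rw [Finset.sum_const, nsmul_eq_mul, card_univ_pairs]
  calc ∑ x ∈ S, ψ x ^ 2
      ≤ (2 * d) / (2 * d + B) ^ 2 * ∑ x ∈ S, ∑ p : Fin d × Bool, ψ (nbr x p) ^ 2 := step1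
    _ ≤ (2 * d) / (2 * d + B) ^ 2 * ((2 * d) * ∑ y ∈ T, ψ y ^ 2) := by
        apply mul_le_mul_of_nonneg_left step2; positivity
    _ = ((2 * d) / (2 * d + B)) ^ 2 * ∑ y ∈ T, ψ y ^ 2 := by
        field_simp

/-- Lemma 4.2 in the paper: ℓ² mass of an eigenfunction on a region `D'`
where the potential is small and which is far from the high points of the potential. -/
theorem mass_bound {d : ℕ} (hd : 0 < d) (D : Finset (Site d)) (ξ : Site d → ℝ)
    (lam : ℝ) (ψ : Site d → ℝ) (hψ : IsEigen D ξ lam ψ)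
    (A A' : ℝ) (hA : 0 < A) (hAA' : A ≤ A') (R : ℕ)
    (D' : Finset (Site d)) (hD' : D' ⊆ D)
    (hsmall : ∀ x ∈ D', ξ x ≤ lam - A')
    (hfar : ∀ x ∈ D, lam - A ≤ ξ x → ∀ y ∈ D', R ≤ dist1 x y) :
    ∑ x ∈ D', (ψ x) ^ 2 ≤
      (1 + A / (2 * d)) ^ ((2 : ℤ) - 2 * R) * ((1 + A' / (2 * d)) ^ (-2 : ℤ)) *
        ∑ x ∈ D, (ψ x) ^ 2 := by
  classical
  obtain ⟨hψ0, -, hEig⟩ := hψ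
  have hd2 : (0:ℝ) < 2 * d := by positivity
  have hA' : (0:ℝ) < A' := lt_of_lt_of_le hA hAA'
  set b : ℝ := ((2 * d) / (2 * d + A)) ^ 2 with hb
  set b' : ℝ := ((2 * d) / (2 * d + A')) ^ 2 with hb'
  have hbpos : 0 < b := by positivity
  have hb'pos : 0 < b' := by positivity
  -- the growing neighborhoods of D'
  set Sr : ℕ → Finset (Site d) :=
    fun r => D.filter (fun x => ∃ y ∈ D', dist1 x y ≤ r) with hSrdef
  have hSrD : ∀ r, Sr r ⊆ D := fun r => Finset.filter_subset _ _
  have hMnonneg : ∀ r, (0:ℝ) ≤ ∑ x ∈ Sr r, ψ x ^ 2 :=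
    fun r => Finset.sum_nonneg fun x _ => sq_nonneg _
  have hMD : ∀ r, ∑ x ∈ Sr r, ψ x ^ 2 ≤ ∑ x ∈ D, ψ x ^ 2 := fun r =>
    Finset.sum_le_sum_of_subset_of_nonneg (hSrD r) (fun x _ _ => sq_nonneg _)
  -- first step, using A'
  have hfirst : ∑ x ∈ D', ψ x ^ 2 ≤ b' * ∑ x ∈ Sr 1, ψ x ^ 2 := by
    apply region_step hd D ξ lam ψ hψ0 hEig A' hA' D' (Sr 1) hD' hsmall
    intro x hx y hxy hyD
    exact Finset.mem_filter.mpr ⟨hyD, x, hx, by rw [dist1_comm]; omega⟩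
  -- subsequent steps, using A
  have hstep : ∀ r : ℕ, r + 1 ≤ R →
      ∑ x ∈ Sr r, ψ x ^ 2 ≤ b * ∑ x ∈ Sr (r + 1), ψ x ^ 2 := by
    intro r hr
    apply region_step hd D ξ lam ψ hψ0 hEig A hA (Sr r) (Sr (r + 1)) (hSrD r)
    · intro x hx
      obtain ⟨hxD, z, hzD', hz⟩ := Finset.mem_filter.mp hx
      by_contra hc
      push_neg at hc
      have := hfar x hxD (le_of_lt hc) z hzD'
      omega
    · intro x hx y hxy hyD
      obtain ⟨hxD, z, hzD', hz⟩ := Finset.mem_filter.mp hx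
      refine Finset.mem_filter.mpr ⟨hyD, z, hzD', ?_⟩
      have := dist1_triangle y x z
      rw [dist1_comm y x] at this
      omega
  -- iterate
  have hchain : ∀ k : ℕ, 1 + k ≤ R →
      ∑ x ∈ Sr 1, ψ x ^ 2 ≤ b ^ k * ∑ x ∈ Sr (1 + k), ψ x ^ 2 := by
    intro k
    induction k with
    | zero => intro _; simp
    | succ n ih =>
      intro hn
      have h1 : 1 + n ≤ R := by omega
      calc ∑ x ∈ Sr 1, ψ x ^ 2 ≤ b ^ n * ∑ x ∈ Sr (1 + n), ψ x ^ 2 := ih h1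
        _ ≤ b ^ n * (b * ∑ x ∈ Sr (1 + n + 1), ψ x ^ 2) := by
            apply mul_le_mul_of_nonneg_left (hstep (1 + n) (by omega)) (by positivity)
        _ = b ^ (n + 1) * ∑ x ∈ Sr (1 + (n + 1)), ψ x ^ 2 := by
            rw [show 1 + n + 1 = 1 + (n + 1) by omega]; ring
  -- identify the constants
  set u : ℝ := 1 + A / (2 * d) with hu
  set u' : ℝ := 1 + A' / (2 * d) with hu'
  have hupos : 0 < u := by positivity
  have hu'pos : 0 < u' := by positivity
  have key : ∀ C : ℝ, 0 < C → ((2 * d) / (2 * d + C)) ^ 2 = ((1 + C / (2 * d)) ^ 2)⁻¹ := by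
    intro C hC
    have h1 : (2 * (d:ℝ) + C) ≠ 0 := by positivity
    have h2 : (2 * (d:ℝ)) ≠ 0 := ne_of_gt hd2
    have h3 : 1 + C / (2 * (d:ℝ)) = (2 * d + C) / (2 * d) := by field_simp
    rw [h3, div_pow, div_pow, inv_div]
  have hbu : b = (u ^ 2)⁻¹ := by rw [hb, key A hA, hu]
  have hb'u : b' = u' ^ (-2 : ℤ) := by
    have h2 : u' ^ (-2 : ℤ) = (u' ^ (2:ℕ))⁻¹ := by
      rw [zpow_neg]
      norm_cast
    rw [hb', key A' hA', ← hu', h2]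
  -- conclude, by cases on R
  rcases Nat.eq_zero_or_pos R with hR | hR
  · subst hR
    have hfin : ∑ x ∈ D', ψ x ^ 2 ≤ b' * ∑ x ∈ D, ψ x ^ 2 :=
      le_trans hfirst (mul_le_mul_of_nonneg_left (hMD 1) (le_of_lt hb'pos))
    have hconst : u ^ ((2:ℤ) - 2 * ((0:ℕ):ℤ)) = u ^ (2:ℕ) := by
      rw [show (2:ℤ) - 2 * ((0:ℕ):ℤ) = ((2:ℕ):ℤ) by norm_num, zpow_natCast]
    rw [hconst]
    have hu1 : (1:ℝ) ≤ u := by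
      rw [hu]; nlinarith [div_nonneg (le_of_lt hA) (le_of_lt hd2)]
    have hu2 : (1:ℝ) ≤ u ^ 2 := one_le_pow₀ hu1
    calc ∑ x ∈ D', ψ x ^ 2 ≤ b' * ∑ x ∈ D, ψ x ^ 2 := hfin
      _ = 1 * (b' * ∑ x ∈ D, ψ x ^ 2) := by ring
      _ ≤ u ^ 2 * (b' * ∑ x ∈ D, ψ x ^ 2) := by
          apply mul_le_mul_of_nonneg_right hu2
          positivity
      _ = u ^ 2 * u' ^ (-2 : ℤ) * ∑ x ∈ D, ψ x ^ 2 := by rw [← hb'u]; ring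
  · obtain ⟨k, rfl⟩ : ∃ k, R = k + 1 := ⟨R - 1, by omega⟩
    have hfin : ∑ x ∈ D', ψ x ^ 2 ≤ b' * (b ^ k * ∑ x ∈ D, ψ x ^ 2) := by
      calc ∑ x ∈ D', ψ x ^ 2 ≤ b' * ∑ x ∈ Sr 1, ψ x ^ 2 := hfirst
        _ ≤ b' * (b ^ k * ∑ x ∈ Sr (1 + k), ψ x ^ 2) := by
            apply mul_le_mul_of_nonneg_left (hchain k (by omega)) (le_of_lt hb'pos)
        _ ≤ b' * (b ^ k * ∑ x ∈ D, ψ x ^ 2) := by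
            apply mul_le_mul_of_nonneg_left _ (le_of_lt hb'pos)
            exact mul_le_mul_of_nonneg_left (hMD (1 + k)) (by positivity)
    have hconst : u ^ ((2:ℤ) - 2 * ((k + 1 : ℕ) : ℤ)) = b ^ k := by
      have hne : u ≠ 0 := ne_of_gt hupos
      have he : (2:ℤ) - 2 * ((k + 1 : ℕ) : ℤ) = -(((2 * k : ℕ) : ℤ)) := by push_cast; ring
      rw [he, zpow_neg, zpow_natCast, pow_mul, ← inv_pow, ← hbu]
    calc ∑ x ∈ D', ψ x ^ 2 ≤ b' * (b ^ k * ∑ x ∈ D, ψ x ^ 2) := hfin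
      _ = u ^ ((2:ℤ) - 2 * ((k + 1 : ℕ) : ℤ)) * u' ^ (-2 : ℤ) * ∑ x ∈ D, ψ x ^ 2 := by
          rw [hconst, ← hb'u]; ring

end RSO
end

section
/- Let D ⊂ Z^d be finite, and U ⊆ D. For s ≥ 0, define ξ_s := ξ - s·1_{D∖U}, and let λ_D^{(k)}(ξ) denote the k-th largest eigenvalue (counted with multiplicity) of the Dirichlet operator H_{D,ξ} = Δ + ξ on D. Then for each k ∈ {1,...,|U|}: (a) the map s ↦ λ_D^{(k)}(ξ_s) is non-increasing; (b) it is Lipschitz continuous with Lipschitz constant one; and (c) λ_D^{(k)}(ξ_s) → λ_U^{(k)}(ξ) as s → ∞, where λ_U^{(k)}(ξ) is the k-th largest Dirichlet eigenvalue in U. -/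
open scoped BigOperators
open MeasureTheory

namespace RSO

section Spectral

variable {m : Type*} [Fintype m] [DecidableEq m]

/-- quadratic form of a matrix on EuclideanSpace -/
noncomputable def qf (A : Matrix m m ℝ) (x : EuclideanSpace ℝ m) : ℝ :=
  inner ℝ x (Matrix.toEuclideanLin A x)

/-- sorting equiv: descending eigenvalues -/
noncomputable def sortPerm {A : Matrix m m ℝ} (hA : A.IsHermitian) :
    Fin (Fintype.card m) ≃ m :=
  (Tuple.sort (fun j => -hA.eigenvalues ((Fintype.equivFin m).symm j))).trans
    (Fintype.equivFin m).symm

/-- descending sorted eigenvalues -/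
noncomputable def sEig {A : Matrix m m ℝ} (hA : A.IsHermitian) (j : Fin (Fintype.card m)) : ℝ :=
  hA.eigenvalues (sortPerm hA j)

lemma sEig_antitone {A : Matrix m m ℝ} (hA : A.IsHermitian) : Antitone (sEig hA) := by
  have h := Tuple.monotone_sort (fun j => -hA.eigenvalues ((Fintype.equivFin m).symm j))
  intro a b hab
  have := h hab
  simp only [Function.comp_apply] at this
  simpa [sEig, sortPerm, neg_le_neg_iff] using this

lemma qf_eq_sum (A : Matrix m m ℝ) (x : EuclideanSpace ℝ m) :
    qf A x = ∑ a, ∑ b, x a * (A a b * x b) := by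
  simp only [qf, Matrix.toEuclideanLin_apply, PiLp.inner_apply, RCLike.inner_apply,
    conj_trivial]
  refine Finset.sum_congr rfl fun a _ => ?_
  simp [Matrix.mulVec, dotProduct, Finset.mul_sum]
  rw [Finset.sum_mul]
  exact Finset.sum_congr rfl fun _ _ => by ring

lemma toEuclideanLin_eigen {A : Matrix m m ℝ} (hA : A.IsHermitian) (i : m) :
    Matrix.toEuclideanLin A (hA.eigenvectorBasis i) = hA.eigenvalues i • hA.eigenvectorBasis i := by
  have h := hA.mulVec_eigenvectorBasis i
  apply (WithLp.equiv 2 (m → ℝ)).injective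
  ext a
  have := congrFun h a
  simpa [Matrix.toEuclideanLin_apply] using this

lemma repr_toEuclideanLin {A : Matrix m m ℝ} (hA : A.IsHermitian) (x : EuclideanSpace ℝ m)
    (i : m) : hA.eigenvectorBasis.repr (Matrix.toEuclideanLin A x) i
      = hA.eigenvalues i * hA.eigenvectorBasis.repr x i := by
  have hsym : (Matrix.toEuclideanLin A).IsSymmetric :=
    (Matrix.isHermitian_iff_isSymmetric).1 hA
  rw [OrthonormalBasis.repr_apply_apply, OrthonormalBasis.repr_apply_apply,
    ← hsym (hA.eigenvectorBasis i) x, toEuclideanLin_eigen hA i,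
    inner_smul_left]
  simp

lemma qf_eq_repr {A : Matrix m m ℝ} (hA : A.IsHermitian) (x : EuclideanSpace ℝ m) :
    qf A x = ∑ i, hA.eigenvalues i * (hA.eigenvectorBasis.repr x i)^2 := by
  rw [qf, ← hA.eigenvectorBasis.repr.inner_map_map x (Matrix.toEuclideanLin A x)]
  simp only [PiLp.inner_apply, RCLike.inner_apply, conj_trivial]
  refine Finset.sum_congr rfl fun i _ => ?_
  rw [repr_toEuclideanLin hA]
  ring

lemma norm_sq_eq_repr {A : Matrix m m ℝ} (hA : A.IsHermitian) (x : EuclideanSpace ℝ m) :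
    ‖x‖^2 = ∑ i, (hA.eigenvectorBasis.repr x i)^2 := by
  rw [← real_inner_self_eq_norm_sq, ← hA.eigenvectorBasis.repr.inner_map_map x x]
  simp only [PiLp.inner_apply, RCLike.inner_apply, conj_trivial]
  exact Finset.sum_congr rfl fun i _ => (sq _).symm

lemma qf_le_of_repr {A : Matrix m m ℝ} (hA : A.IsHermitian) (x : EuclideanSpace ℝ m) (c : ℝ)
    (h : ∀ i, hA.eigenvectorBasis.repr x i ≠ 0 → hA.eigenvalues i ≤ c) :
    qf A x ≤ c * ‖x‖^2 := by
  rw [qf_eq_repr hA, norm_sq_eq_repr hA, Finset.mul_sum]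
  refine Finset.sum_le_sum fun i _ => ?_
  by_cases hi : hA.eigenvectorBasis.repr x i = 0
  · simp [hi]
  · exact mul_le_mul_of_nonneg_right (h i hi) (sq_nonneg _)

lemma le_qf_of_repr {A : Matrix m m ℝ} (hA : A.IsHermitian) (x : EuclideanSpace ℝ m) (c : ℝ)
    (h : ∀ i, hA.eigenvectorBasis.repr x i ≠ 0 → c ≤ hA.eigenvalues i) :
    c * ‖x‖^2 ≤ qf A x := by
  rw [qf_eq_repr hA, norm_sq_eq_repr hA, Finset.mul_sum]
  refine Finset.sum_le_sum fun i _ => ?_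
  by_cases hi : hA.eigenvectorBasis.repr x i = 0
  · simp [hi]
  · exact mul_le_mul_of_nonneg_right (h i hi) (sq_nonneg _)

lemma repr_eq_zero_of_mem_span {A : Matrix m m ℝ} (hA : A.IsHermitian)
    (S : Set m) {x : EuclideanSpace ℝ m}
    (hx : x ∈ Submodule.span ℝ (hA.eigenvectorBasis '' S)) :
    ∀ i ∉ S, hA.eigenvectorBasis.repr x i = 0 := by
  intro i hi
  rw [OrthonormalBasis.repr_apply_apply]
  induction hx using Submodule.span_induction with
  | mem y hy =>
    obtain ⟨j, hj, rfl⟩ := hy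
    exact hA.eigenvectorBasis.orthonormal.2 (fun h => hi (h ▸ hj))
  | zero => simp
  | add y z _ _ hy hz => rw [inner_add_right, hy, hz]; simp
  | smul a y _ hy => rw [inner_smul_right, hy]; simp

end Spectral

section CF
variable {E : Type*} [NormedAddCommGroup E] [InnerProductSpace ℝ E] [FiniteDimensional ℝ E]

lemma exists_ne_zero_mem_inf (W W' : Submodule ℝ E)
    (h : Module.finrank ℝ E < Module.finrank ℝ W + Module.finrank ℝ W') :
    ∃ x : E, x ≠ 0 ∧ x ∈ W ∧ x ∈ W' := by
  have h1 := Submodule.finrank_sup_add_finrank_inf_eq W W'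
  have h2 : Module.finrank ℝ ↥(W ⊔ W') ≤ Module.finrank ℝ E := Submodule.finrank_le _
  have h3 : 0 < Module.finrank ℝ ↥(W ⊓ W') := by omega
  have : Nontrivial ↥(W ⊓ W') := Module.nontrivial_of_finrank_pos h3
  obtain ⟨x, hx⟩ := exists_ne (0 : ↥(W ⊓ W'))
  exact ⟨(x : E), by simpa [Submodule.coe_eq_zero] using hx,
    x.2.1, x.2.2⟩

lemma finrank_span_orthonormal {ι : Type*} {v : ι → E} (hv : Orthonormal ℝ v)
    (S : Finset ι) :
    Module.finrank ℝ (Submodule.span ℝ (v '' ↑S)) = S.card := by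
  have hli : LinearIndependent ℝ (fun i : ↥(↑S : Set ι) => v i) :=
    (hv.linearIndependent).comp _ Subtype.val_injective
  have := finrank_span_eq_card hli
  rw [← Set.image_eq_range] at this
  rw [this]; simpa using Fintype.card_coe S

end CF

section CFmat
variable {m : Type*} [Fintype m] [DecidableEq m]

lemma cf_low {A : Matrix m m ℝ} (hA : A.IsHermitian) (c : ℝ)
    (W : Submodule ℝ (EuclideanSpace ℝ m)) (k0 : ℕ) (hk : k0 < Fintype.card m)
    (hdim : k0 + 1 ≤ Module.finrank ℝ W)
    (hq : ∀ x ∈ W, c * ‖x‖^2 ≤ qf A x) :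
    c ≤ sEig hA ⟨k0, hk⟩ := by
  set b := hA.eigenvectorBasis
  set S : Finset m := (Finset.Ici (⟨k0, hk⟩ : Fin (Fintype.card m))).image (sortPerm hA)
  set W' : Submodule ℝ (EuclideanSpace ℝ m) := Submodule.span ℝ (b '' ↑S)
  have hcardS : S.card = Fintype.card m - k0 := by
    rw [Finset.card_image_of_injective _ (sortPerm hA).injective, Fin.card_Ici]
  have hdim' : Module.finrank ℝ W' = Fintype.card m - k0 :=
    (finrank_span_orthonormal b.orthonormal S).trans hcardS
  obtain ⟨x, hx0, hxW, hxW'⟩ := exists_ne_zero_mem_inf W W' (by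
    rw [finrank_euclideanSpace, hdim']; omega)
  have h1 : c * ‖x‖^2 ≤ qf A x := hq x hxW
  have h2 : qf A x ≤ sEig hA ⟨k0, hk⟩ * ‖x‖^2 := by
    refine qf_le_of_repr hA x _ fun i hi => ?_
    have hiS : i ∈ (↑S : Set m) := by
      by_contra hiS
      exact hi (repr_eq_zero_of_mem_span hA ↑S hxW' i hiS)
    obtain ⟨j, hj, rfl⟩ := Finset.mem_image.1 hiS
    exact sEig_antitone hA (Finset.mem_Ici.1 hj)
  have hx2 : 0 < ‖x‖^2 := pow_pos (norm_pos_iff.mpr hx0) 2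
  nlinarith

lemma cf_high {A : Matrix m m ℝ} (hA : A.IsHermitian) (c : ℝ)
    (W : Submodule ℝ (EuclideanSpace ℝ m)) (k0 : ℕ) (hk : k0 < Fintype.card m)
    (hdim : Fintype.card m - k0 ≤ Module.finrank ℝ W)
    (hq : ∀ x ∈ W, qf A x ≤ c * ‖x‖^2) :
    sEig hA ⟨k0, hk⟩ ≤ c := by
  set b := hA.eigenvectorBasis
  set S : Finset m := (Finset.Iic (⟨k0, hk⟩ : Fin (Fintype.card m))).image (sortPerm hA)
  set W' : Submodule ℝ (EuclideanSpace ℝ m) := Submodule.span ℝ (b '' ↑S)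
  have hcardS : S.card = k0 + 1 := by
    rw [Finset.card_image_of_injective _ (sortPerm hA).injective, Fin.card_Iic]
  have hdim' : Module.finrank ℝ W' = k0 + 1 :=
    (finrank_span_orthonormal b.orthonormal S).trans hcardS
  obtain ⟨x, hx0, hxW, hxW'⟩ := exists_ne_zero_mem_inf W W' (by
    rw [finrank_euclideanSpace, hdim']; omega)
  have h1 : qf A x ≤ c * ‖x‖^2 := hq x hxW
  have h2 : sEig hA ⟨k0, hk⟩ * ‖x‖^2 ≤ qf A x := by
    refine le_qf_of_repr hA x _ fun i hi => ?_
    have hiS : i ∈ (↑S : Set m) := by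
      by_contra hiS
      exact hi (repr_eq_zero_of_mem_span hA ↑S hxW' i hiS)
    obtain ⟨j, hj, rfl⟩ := Finset.mem_image.1 hiS
    exact sEig_antitone hA (Finset.mem_Iic.1 hj)
  have hx2 : 0 < ‖x‖^2 := pow_pos (norm_pos_iff.mpr hx0) 2
  nlinarith

lemma weyl {A B : Matrix m m ℝ} (hA : A.IsHermitian) (hB : B.IsHermitian) (c : ℝ)
    (h : ∀ x : EuclideanSpace ℝ m, qf A x ≤ qf B x + c * ‖x‖^2)
    (k0 : ℕ) (hk : k0 < Fintype.card m) :
    sEig hA ⟨k0, hk⟩ ≤ sEig hB ⟨k0, hk⟩ + c := by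
  set b := hA.eigenvectorBasis
  set S : Finset m := (Finset.Iic (⟨k0, hk⟩ : Fin (Fintype.card m))).image (sortPerm hA)
  set W : Submodule ℝ (EuclideanSpace ℝ m) := Submodule.span ℝ (b '' ↑S)
  have hcardS : S.card = k0 + 1 := by
    rw [Finset.card_image_of_injective _ (sortPerm hA).injective, Fin.card_Iic]
  have hdim : Module.finrank ℝ W = k0 + 1 :=
    (finrank_span_orthonormal b.orthonormal S).trans hcardS
  have := cf_low hB (sEig hA ⟨k0, hk⟩ - c) W k0 hk (le_of_eq hdim.symm) ?_
  · linarith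
  · intro x hxW
    have h2 : sEig hA ⟨k0, hk⟩ * ‖x‖^2 ≤ qf A x := by
      refine le_qf_of_repr hA x _ fun i hi => ?_
      have hiS : i ∈ (↑S : Set m) := by
        by_contra hiS
        exact hi (repr_eq_zero_of_mem_span hA ↑S hxW i hiS)
      obtain ⟨j, hj, rfl⟩ := Finset.mem_image.1 hiS
      exact sEig_antitone hA (Finset.mem_Iic.1 hj)
    have := h x
    nlinarith [sq_nonneg ‖x‖]

end CFmat


section Bridge
variable {m : Type*} [Fintype m] [DecidableEq m]

lemma sorted_getD_eq {A : Matrix m m ℝ} (hA : A.IsHermitian) (k0 : ℕ)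
    (hk : k0 < Fintype.card m) :
    (List.insertionSort (fun a b : ℝ => b ≤ a)
      (((Finset.univ : Finset m).val.map hA.eigenvalues).toList)).getD k0 0
      = sEig hA ⟨k0, hk⟩ := by
  set f := sEig hA
  set σ := sortPerm hA
  have hms : (Finset.univ : Finset m).val.map hA.eigenvalues = ↑(List.ofFn f) := by
    have h1 : (Finset.univ : Finset m).val
        = Multiset.map σ (Finset.univ : Finset (Fin (Fintype.card m))).val := by
      have := Finset.map_univ_equiv σ
      rw [← this]; rfl
    rw [h1, Multiset.map_map, ← Fin.univ_val_map]
    rfl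
  have hperm : List.Perm (List.insertionSort (fun a b : ℝ => b ≤ a)
      (((Finset.univ : Finset m).val.map hA.eigenvalues).toList)) (List.ofFn f) := by
    refine (List.perm_insertionSort _ _).trans ?_
    rw [← Multiset.coe_eq_coe, Multiset.coe_toList, hms]
  have hsorted2 : List.Pairwise (fun a b : ℝ => b ≤ a) (List.ofFn f) := by
    rw [List.pairwise_ofFn]
    exact fun i j hij => sEig_antitone hA hij.le
  have heq : List.insertionSort (fun a b : ℝ => b ≤ a)
      (((Finset.univ : Finset m).val.map hA.eigenvalues).toList) = List.ofFn f :=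
    hperm.eq_of_pairwise (fun a b _ _ h1 h2 => le_antisymm h2 h1) (List.pairwise_insertionSort _ _) hsorted2
  rw [heq, List.getD_eq_getElem _ _ (by simpa using hk), List.getElem_ofFn]

end Bridge

lemma lambdaK_eq_sEig {d : ℕ} (D : Finset (Site d)) (ξ : Site d → ℝ) (k : ℕ)
    (hk : k - 1 < Fintype.card ↥D) :
    lambdaK D ξ k = sEig (matH_isHermitian D ξ) ⟨k - 1, hk⟩ := by
  unfold lambdaK
  rw [← Finset.univ_eq_attach]
  exact sorted_getD_eq (matH_isHermitian D ξ) (k - 1) hk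
section Mat
variable {m : Type*} [Fintype m] [DecidableEq m]

noncomputable def qf' (A : Matrix m m ℝ) (x : EuclideanSpace ℝ m) : ℝ :=
  ∑ a, ∑ b, x a * (A a b * x b)

lemma norm_sq_eq_sum (x : EuclideanSpace ℝ m) : ‖x‖^2 = ∑ a, (x a)^2 := by
  rw [← real_inner_self_eq_norm_sq]
  simp only [PiLp.inner_apply, RCLike.inner_apply, conj_trivial]
  exact Finset.sum_congr rfl fun i _ => (sq _).symm

lemma abs_coord_le (x : EuclideanSpace ℝ m) (a : m) : |x a| ≤ ‖x‖ := by
  have h1 : (x a)^2 ≤ ‖x‖^2 := by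
    rw [norm_sq_eq_sum]
    exact Finset.single_le_sum (fun i _ => sq_nonneg (x i)) (Finset.mem_univ a)
  calc |x a| = Real.sqrt ((x a)^2) := (Real.sqrt_sq_eq_abs _).symm
    _ ≤ Real.sqrt (‖x‖^2) := Real.sqrt_le_sqrt h1
    _ = ‖x‖ := Real.sqrt_sq (norm_nonneg x)

/-- bilinear cross-term bound -/
lemma cross_bound (A : Matrix m m ℝ) (x y : EuclideanSpace ℝ m) :
    |∑ a, ∑ b, x a * (A a b * y b)| ≤ (∑ a, ∑ b, |A a b|) * ‖x‖ * ‖y‖ := by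
  calc |∑ a, ∑ b, x a * (A a b * y b)| ≤ ∑ a, |∑ b, x a * (A a b * y b)| :=
        Finset.abs_sum_le_sum_abs _ _
    _ ≤ ∑ a, ∑ b, |x a * (A a b * y b)| :=
        Finset.sum_le_sum fun a _ => Finset.abs_sum_le_sum_abs _ _
    _ ≤ ∑ a, ∑ b, |A a b| * (‖x‖ * ‖y‖) := by
        refine Finset.sum_le_sum fun a _ => Finset.sum_le_sum fun b _ => ?_
        rw [abs_mul, abs_mul]
        calc |x a| * (|A a b| * |y b|) = |A a b| * (|x a| * |y b|) := by ring
          _ ≤ |A a b| * (‖x‖ * ‖y‖) := by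
              refine mul_le_mul_of_nonneg_left ?_ (abs_nonneg _)
              exact mul_le_mul (abs_coord_le x a) (abs_coord_le y b) (abs_nonneg _) (norm_nonneg _)
    _ = (∑ a, ∑ b, |A a b|) * ‖x‖ * ‖y‖ := by
        simp only [← Finset.sum_mul]
        ring

lemma qf'_add (A : Matrix m m ℝ) (p z : EuclideanSpace ℝ m) :
    qf' A (p + z) = qf' A p + ((∑ a, ∑ b, p a * (A a b * z b))
      + (∑ a, ∑ b, z a * (A a b * p b)) + qf' A z) := by
  unfold qf'
  have h : ∀ a b : m, (p + z) a * (A a b * (p + z) b)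
      = p a * (A a b * p b) + (p a * (A a b * z b) + (z a * (A a b * p b) + z a * (A a b * z b))) := by
    intro a b
    have hp : (p + z) a = p a + z a := rfl
    have hq : (p + z) b = p b + z b := rfl
    rw [hp, hq]; ring
  simp only [h, Finset.sum_add_distrib]
  ring

lemma qf'_eq_qf (A : Matrix m m ℝ) (x : EuclideanSpace ℝ m) :
    qf' A x = qf A x := (qf_eq_sum A x).symm

end Mat

section DU
variable {d : ℕ} {D U : Finset (Site d)} (hU : U ⊆ D)

/-- inclusion of index types -/
def incl (hU : U ⊆ D) (u : ↥U) : ↥D := ⟨u.1, hU u.2⟩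

lemma incl_injective : Function.Injective (incl hU) := by
  intro u v h
  have := congrArg Subtype.val h
  exact Subtype.ext this

/-- extension by zero as a linear map -/
noncomputable def extL (hU : U ⊆ D) : EuclideanSpace ℝ ↥U →ₗ[ℝ] EuclideanSpace ℝ ↥D where
  toFun y := WithLp.toLp 2 fun a => if h : (a : Site d) ∈ U then y ⟨a, h⟩ else 0
  map_add' y y' := by
    ext a
    by_cases h : (a : Site d) ∈ U <;> simp [h] <;> rfl
  map_smul' c y := by
    ext a
    by_cases h : (a : Site d) ∈ U <;> simp [h] <;> rfl

lemma extL_apply_incl (y : EuclideanSpace ℝ ↥U) (u : ↥U) :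
    extL hU y (incl hU u) = y u := by
  simp only [extL, LinearMap.coe_mk, AddHom.coe_mk, incl, PiLp.toLp_apply]
  rw [dif_pos u.2]

lemma extL_apply_not_mem (y : EuclideanSpace ℝ ↥U) (a : ↥D) (ha : (a : Site d) ∉ U) :
    extL hU y a = 0 := by
  simp only [extL, LinearMap.coe_mk, AddHom.coe_mk, PiLp.toLp_apply]
  rw [dif_neg ha]

/-- the image finset of `incl` -/
lemma sum_extL (y : EuclideanSpace ℝ ↥U) (g : ↥D → ℝ) :
    ∑ a : ↥D, extL hU y a * g a = ∑ u : ↥U, y u * g (incl hU u) := by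
  classical
  set e : ↥U ↪ ↥D := ⟨incl hU, incl_injective hU⟩
  have h1 : ∑ u : ↥U, y u * g (incl hU u)
      = ∑ a ∈ Finset.univ.map e, extL hU y a * g a := by
    rw [Finset.sum_map]
    refine Finset.sum_congr rfl fun u _ => ?_
    show y u * g (incl hU u) = extL hU y (incl hU u) * g (incl hU u)
    rw [extL_apply_incl]
  rw [h1]
  refine (Finset.sum_subset (Finset.subset_univ _) fun a _ ha => ?_).symm
  have haU : (a : Site d) ∉ U := by
    intro haU
    exact ha (Finset.mem_map.2 ⟨⟨(a : Site d), haU⟩, Finset.mem_univ _, Subtype.ext rfl⟩)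
  rw [extL_apply_not_mem hU _ _ haU, zero_mul]

lemma inner_extL_left (y : EuclideanSpace ℝ ↥U) (x : EuclideanSpace ℝ ↥D) :
    (inner ℝ (extL hU y) x : ℝ) = ∑ u : ↥U, y u * x (incl hU u) := by
  simp only [PiLp.inner_apply, RCLike.inner_apply, conj_trivial]
  rw [← sum_extL hU y x]
  exact Finset.sum_congr rfl fun _ _ => mul_comm _ _

lemma inner_extL_extL (y y' : EuclideanSpace ℝ ↥U) :
    (inner ℝ (extL hU y) (extL hU y') : ℝ) = inner ℝ y y' := by
  rw [inner_extL_left]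
  simp only [PiLp.inner_apply, RCLike.inner_apply, conj_trivial]
  exact Finset.sum_congr rfl fun u _ => by rw [extL_apply_incl, mul_comm]

lemma norm_extL (y : EuclideanSpace ℝ ↥U) : ‖extL hU y‖ = ‖y‖ := by
  have h : ‖extL hU y‖^2 = ‖y‖^2 := by
    rw [← real_inner_self_eq_norm_sq, ← real_inner_self_eq_norm_sq, inner_extL_extL]
  nlinarith [norm_nonneg (extL hU y), norm_nonneg y]

def restr (hU : U ⊆ D) (x : EuclideanSpace ℝ ↥D) : EuclideanSpace ℝ ↥U :=
  WithLp.toLp 2 fun u => x (incl hU u)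

lemma inner_extL_restr (y : EuclideanSpace ℝ ↥U) (x : EuclideanSpace ℝ ↥D) :
    (inner ℝ (extL hU y) x : ℝ) = inner ℝ y (restr hU x) := by
  rw [inner_extL_left]
  simp only [PiLp.inner_apply, RCLike.inner_apply, conj_trivial]
  exact Finset.sum_congr rfl fun _ _ => mul_comm _ _

lemma matH_incl (ξD ξU : Site d → ℝ) (hξ : ∀ z ∈ U, ξD z = ξU z) (u v : ↥U) :
    matH D ξD (incl hU u) (incl hU v) = matH U ξU u v := by
  unfold matH
  have hcoe : ((incl hU u : ↥D) : Site d) = (u : Site d) := rfl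
  have hcoe' : ((incl hU v : ↥D) : Site d) = (v : Site d) := rfl
  have heq : (incl hU u = incl hU v) ↔ (u = v) := by
    constructor
    · intro h; exact Subtype.ext (by rw [← hcoe, ← hcoe', h])
    · rintro rfl; rfl
  rw [hcoe, hcoe']
  by_cases h : u = v
  · subst h
    simp [heq, hξ (u : Site d) u.2]
  · rw [if_neg (fun hh => h (heq.1 hh)), if_neg h]

lemma qf'_extL (ξD ξU : Site d → ℝ) (hξ : ∀ z ∈ U, ξD z = ξU z) (y : EuclideanSpace ℝ ↥U) :
    qf' (matH D ξD) (extL hU y) = qf' (matH U ξU) y := by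
  have step1 : qf' (matH D ξD) (extL hU y)
      = ∑ a : ↥D, extL hU y a * (∑ b, matH D ξD a b * extL hU y b) := by
    simp only [qf', Finset.mul_sum]
  rw [step1, sum_extL hU y (fun a => ∑ b, matH D ξD a b * extL hU y b)]
  have step2 : ∀ u : ↥U, (∑ b, matH D ξD (incl hU u) b * extL hU y b)
      = ∑ v : ↥U, y v * matH U ξU u v := by
    intro u
    have : (∑ b, matH D ξD (incl hU u) b * extL hU y b)
        = ∑ b, extL hU y b * matH D ξD (incl hU u) b :=
      Finset.sum_congr rfl fun b _ => mul_comm _ _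
    rw [this, sum_extL hU y (fun b => matH D ξD (incl hU u) b)]
    exact Finset.sum_congr rfl fun v _ => by rw [matH_incl hU ξD ξU hξ]
  simp only [step2, qf', Finset.mul_sum]
  exact Finset.sum_congr rfl fun u _ => Finset.sum_congr rfl fun v _ => by ring

variable [DecidableEq (Site d)]

lemma matH_shift_entry (ξ : Site d → ℝ) (s : ℝ) (a b : ↥D) :
    matH D (fun z => if z ∈ D \ U then ξ z - s else ξ z) a b
      = matH D ξ a b - (if a = b then (if (a : Site d) ∈ D \ U then s else 0) else 0) := by
  unfold matH
  by_cases hab : a = b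
  · subst hab
    by_cases hm : (a : Site d) ∈ D \ U <;> simp [hm] <;> ring
  · simp [hab]

/-- the mass outside `U` -/
noncomputable def qOut (U : Finset (Site d)) (x : EuclideanSpace ℝ ↥D) : ℝ :=
  ∑ a : ↥D, (if (a : Site d) ∈ D \ U then (x a)^2 else 0)

lemma qf'_shift (ξ : Site d → ℝ) (s : ℝ) (x : EuclideanSpace ℝ ↥D) :
    qf' (matH D (fun z => if z ∈ D \ U then ξ z - s else ξ z)) x
      = qf' (matH D ξ) x - s * qOut U x := by
  simp only [qf', matH_shift_entry (U := U) (D := D), mul_sub, sub_mul, Finset.sum_sub_distrib]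
  congr 1
  have inner_sum : ∀ a : ↥D, (∑ b, x a * ((if a = b then (if (a : Site d) ∈ D \ U then s else 0) else 0) * x b))
      = (if (a : Site d) ∈ D \ U then s * (x a)^2 else 0) := by
    intro a
    rw [Finset.sum_eq_single a]
    · by_cases hm : (a : Site d) ∈ D \ U <;> simp [hm] <;> ring
    · intro b _ hb
      rw [if_neg (fun h => hb h.symm)]
      ring
    · intro h; exact absurd (Finset.mem_univ a) h
  rw [Finset.sum_congr rfl fun a _ => inner_sum a]
  unfold qOut
  rw [Finset.mul_sum]
  refine Finset.sum_congr rfl fun a _ => ?_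
  by_cases hm : (a : Site d) ∈ D \ U <;> simp [hm]

lemma qOut_nonneg (x : EuclideanSpace ℝ ↥D) : 0 ≤ qOut U x :=
  Finset.sum_nonneg fun a _ => by positivity

lemma qOut_le (x : EuclideanSpace ℝ ↥D) : qOut U x ≤ ‖x‖^2 := by
  rw [norm_sq_eq_sum]
  refine Finset.sum_le_sum fun a _ => ?_
  by_cases hm : (a : Site d) ∈ D \ U <;> simp [hm, sq_nonneg]

lemma zpart_incl (x : EuclideanSpace ℝ ↥D) (u : ↥U) :
    (x - extL hU (restr hU x)) (incl hU u) = 0 := by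
  have h1 : (x - extL hU (restr hU x)) (incl hU u) = x (incl hU u) - extL hU (restr hU x) (incl hU u) := rfl
  rw [h1, extL_apply_incl]
  simp [restr]

lemma zpart_not_mem (x : EuclideanSpace ℝ ↥D) (a : ↥D) (ha : (a : Site d) ∉ U) :
    (x - extL hU (restr hU x)) a = x a := by
  have h1 : (x - extL hU (restr hU x)) a = x a - extL hU (restr hU x) a := rfl
  rw [h1, extL_apply_not_mem hU _ _ ha, sub_zero]

lemma inner_extL_zpart (y : EuclideanSpace ℝ ↥U) (x : EuclideanSpace ℝ ↥D) :
    (inner ℝ (extL hU y) (x - extL hU (restr hU x)) : ℝ) = 0 := by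
  rw [inner_extL_left]
  refine Finset.sum_eq_zero fun u _ => ?_
  rw [zpart_incl, mul_zero]

lemma norm_sq_decomp (x : EuclideanSpace ℝ ↥D) :
    ‖x‖^2 = ‖extL hU (restr hU x)‖^2 + ‖x - extL hU (restr hU x)‖^2 := by
  have hx : x = extL hU (restr hU x) + (x - extL hU (restr hU x)) := by abel
  calc ‖x‖^2 = ‖extL hU (restr hU x) + (x - extL hU (restr hU x))‖^2 := by rw [← hx]
    _ = _ := by
      rw [norm_add_sq_real, inner_extL_zpart]; ring

lemma qOut_eq_zpart (x : EuclideanSpace ℝ ↥D) :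
    qOut U x = ‖x - extL hU (restr hU x)‖^2 := by
  rw [norm_sq_eq_sum]
  refine Finset.sum_congr rfl fun a _ => ?_
  by_cases hm : (a : Site d) ∈ U
  · have ha : a = incl hU ⟨(a : Site d), hm⟩ := Subtype.ext rfl
    have hz : (x - extL hU (restr hU x)) a = 0 := by rw [ha]; exact zpart_incl hU x _
    have hnm : (a : Site d) ∉ D \ U := fun h => (Finset.mem_sdiff.1 h).2 hm
    rw [if_neg hnm, hz]
    norm_num
  · rw [if_pos (Finset.mem_sdiff.2 ⟨a.2, hm⟩), zpart_not_mem hU x a hm]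

end DU

section Main
variable {d : ℕ} {D U : Finset (Site d)}

lemma eig_lower (hU : U ⊆ D) (ξ : Site d → ℝ) (s : ℝ)
    {k0 : ℕ} (hkD : k0 < Fintype.card ↥D) (hkU : k0 < Fintype.card ↥U) :
    sEig (matH_isHermitian U ξ) ⟨k0, hkU⟩
      ≤ sEig (matH_isHermitian D (fun z => if z ∈ D \ U then ξ z - s else ξ z)) ⟨k0, hkD⟩ := by
  set hAU := matH_isHermitian U ξ
  set bU := hAU.eigenvectorBasis with hbU
  set σU := sortPerm hAU
  set v : ↥U → EuclideanSpace ℝ ↥D := fun i => extL hU (bU i) with hv_def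
  have hv : Orthonormal ℝ v := by
    rw [orthonormal_iff_ite]
    intro i j
    rw [hv_def]
    simp only
    rw [inner_extL_extL]
    exact orthonormal_iff_ite.1 bU.orthonormal i j
  set SU : Finset ↥U := (Finset.Iic (⟨k0, hkU⟩ : Fin (Fintype.card ↥U))).image σU with hSU
  set W : Submodule ℝ (EuclideanSpace ℝ ↥D) := Submodule.span ℝ (v '' ↑SU) with hW
  have hcard : SU.card = k0 + 1 := by
    rw [hSU, Finset.card_image_of_injective _ σU.injective, Fin.card_Iic]
  have hdim : Module.finrank ℝ W = k0 + 1 :=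
    (finrank_span_orthonormal hv SU).trans hcard
  refine cf_low _ _ W k0 hkD hdim.ge fun x hx => ?_
  have himg : v '' ↑SU = extL hU '' (bU '' ↑SU) := by
    rw [Set.image_image]
  have hx' : x ∈ Submodule.map (extL hU) (Submodule.span ℝ (bU '' ↑SU)) := by
    rw [← Submodule.span_image, ← himg]
    exact hx
  obtain ⟨y, hy, rfl⟩ := hx'
  have hξ : ∀ z ∈ U, (if z ∈ D \ U then ξ z - s else ξ z) = ξ z := by
    intro z hz
    rw [if_neg (fun h => (Finset.mem_sdiff.1 h).2 hz)]
  have hq1 : qf (matH D (fun z => if z ∈ D \ U then ξ z - s else ξ z)) (extL hU y)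
      = qf' (matH U ξ) y := by
    rw [qf_eq_sum]
    exact qf'_extL hU _ ξ hξ y
  have hq2 : sEig hAU ⟨k0, hkU⟩ * ‖y‖^2 ≤ qf' (matH U ξ) y := by
    rw [qf'_eq_qf]
    refine le_qf_of_repr hAU y _ fun i hi => ?_
    have hiS : i ∈ (↑SU : Set ↥U) := by
      by_contra hiS
      exact hi (repr_eq_zero_of_mem_span hAU ↑SU hy i hiS)
    obtain ⟨j, hj, rfl⟩ := Finset.mem_image.1 hiS
    exact sEig_antitone hAU (Finset.mem_Iic.1 hj)
  rw [hq1, norm_extL]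
  exact hq2

set_option maxHeartbeats 2000000 in
lemma eig_upper (hU : U ⊆ D) (ξ : Site d → ℝ)
    {k0 : ℕ} (hkD : k0 < Fintype.card ↥D) (hkU : k0 < Fintype.card ↥U)
    {ε : ℝ} (hε : 0 < ε) :
    ∃ s₀ : ℝ, ∀ s ≥ s₀,
      sEig (matH_isHermitian D (fun z => if z ∈ D \ U then ξ z - s else ξ z)) ⟨k0, hkD⟩
        ≤ sEig (matH_isHermitian U ξ) ⟨k0, hkU⟩ + ε := by
  classical
  set hAU := matH_isHermitian U ξ
  set bU := hAU.eigenvectorBasis with hbU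
  set σU := sortPerm hAU
  set lamU := sEig hAU ⟨k0, hkU⟩ with hlamU
  set B := matH D ξ with hB
  set C : ℝ := ∑ a : ↥D, ∑ b : ↥D, |B a b| with hC
  have hC0 : 0 ≤ C := Finset.sum_nonneg fun a _ => Finset.sum_nonneg fun b _ => abs_nonneg _
  refine ⟨C + C^2/ε + |lamU|, fun s hs => ?_⟩
  set v : ↥U → EuclideanSpace ℝ ↥D := fun i => extL hU (bU i) with hv_def
  have hv : Orthonormal ℝ v := by
    rw [orthonormal_iff_ite]
    intro i j
    rw [hv_def]
    simp only
    rw [inner_extL_extL]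
    exact orthonormal_iff_ite.1 bU.orthonormal i j
  set SU : Finset ↥U := (Finset.Iio (⟨k0, hkU⟩ : Fin (Fintype.card ↥U))).image σU with hSU
  set T : Submodule ℝ (EuclideanSpace ℝ ↥D) := Submodule.span ℝ (v '' ↑SU) with hT
  have hcard : SU.card = k0 := by
    rw [hSU, Finset.card_image_of_injective _ σU.injective, Fin.card_Iio]
  have hdimT : Module.finrank ℝ T = k0 := (finrank_span_orthonormal hv SU).trans hcard
  have hdimW : Module.finrank ℝ (Tᗮ) = Fintype.card ↥D - k0 := by
    have h1 := Submodule.finrank_add_finrank_orthogonal T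
    rw [hdimT, finrank_euclideanSpace] at h1
    omega
  refine cf_high _ _ Tᗮ k0 hkD hdimW.ge fun x hx => ?_
  set y := restr hU x with hy
  set p := extL hU y with hp
  set z := x - p with hz
  have hrepr0 : ∀ i ∈ SU, bU.repr y i = 0 := by
    intro i hi
    have hvT : v i ∈ T := Submodule.subset_span (Set.mem_image_of_mem v (by exact_mod_cast hi))
    have h0 : (inner ℝ (v i) x : ℝ) = 0 := (Submodule.mem_orthogonal T x).1 hx _ hvT
    rw [hv_def] at h0
    simp only at h0
    rw [inner_extL_restr] at h0
    rw [OrthonormalBasis.repr_apply_apply]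
    exact h0
  have hqU : qf' (matH U ξ) y ≤ lamU * ‖y‖^2 := by
    rw [qf'_eq_qf]
    refine qf_le_of_repr hAU y _ fun i hi => ?_
    have hiS : i ∉ SU := fun h => hi (hrepr0 i h)
    have hge : (⟨k0, hkU⟩ : Fin (Fintype.card ↥U)) ≤ σU.symm i := by
      by_contra hlt
      push_neg at hlt
      exact hiS (Finset.mem_image.2 ⟨σU.symm i, Finset.mem_Iio.2 hlt, Equiv.apply_symm_apply _ _⟩)
    have : hAU.eigenvalues i = sEig hAU (σU.symm i) := by
      unfold sEig
      rw [Equiv.apply_symm_apply]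
    rw [this]
    exact sEig_antitone hAU hge
  -- decomposition
  have hxpz : x = p + z := by rw [hz]; abel
  have hshift : qf (matH D (fun z => if z ∈ D \ U then ξ z - s else ξ z)) x
      = qf' B x - s * qOut U x := by
    rw [qf_eq_sum]
    exact qf'_shift ξ s x
  have hsplit : qf' B x = qf' B p + ((∑ a, ∑ b, p a * (B a b * z b))
      + (∑ a, ∑ b, z a * (B a b * p b)) + qf' B z) := by
    conv_lhs => rw [hxpz]
    exact qf'_add B p z
  have hqBp : qf' B p = qf' (matH U ξ) y := qf'_extL hU ξ ξ (fun _ _ => rfl) y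
  have hcr1 : |∑ a, ∑ b, p a * (B a b * z b)| ≤ C * ‖p‖ * ‖z‖ := cross_bound B p z
  have hcr2 : |∑ a, ∑ b, z a * (B a b * p b)| ≤ C * ‖z‖ * ‖p‖ := cross_bound B z p
  have hcr3 : |qf' B z| ≤ C * ‖z‖ * ‖z‖ := cross_bound B z z
  have hqout : qOut U x = ‖z‖^2 := qOut_eq_zpart hU x
  have hnorm : ‖x‖^2 = ‖p‖^2 + ‖z‖^2 := norm_sq_decomp hU x
  have hyp : ‖y‖ = ‖p‖ := (norm_extL hU y).symm
  set a := ‖p‖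
  set t := ‖z‖
  have ha : 0 ≤ a := norm_nonneg _
  have ht : 0 ≤ t := norm_nonneg _
  have hK : C^2 ≤ (lamU + ε - C + s) * ε := by
    have h1 : C^2/ε ≤ lamU + ε - C + s := by
      have h2 : -|lamU| ≤ lamU := neg_abs_le lamU
      linarith
    calc C^2 = (C^2/ε) * ε := by field_simp
      _ ≤ _ := mul_le_mul_of_nonneg_right h1 hε.le
  have hkey : 0 ≤ ε*a^2 + (lamU + ε - C + s)*t^2 - 2*C*a*t := by
    nlinarith [sq_nonneg (ε*a - C*t), sq_nonneg t, sq_nonneg a, mul_nonneg ha ht,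
      mul_le_mul_of_nonneg_right hK (sq_nonneg t)]
  have hchain : qf (matH D (fun z => if z ∈ D \ U then ξ z - s else ξ z)) x
      ≤ lamU * a^2 + 2*C*a*t + C*t^2 - s*t^2 := by
    rw [hshift, hsplit, hqBp, hqout]
    have b1 := abs_le.1 hcr1
    have b2 := abs_le.1 hcr2
    have b3 := abs_le.1 hcr3
    rw [hyp] at hqU
    nlinarith [hqU]
  calc qf (matH D (fun z => if z ∈ D \ U then ξ z - s else ξ z)) x
      ≤ lamU * a^2 + 2*C*a*t + C*t^2 - s*t^2 := hchain
    _ ≤ (lamU + ε) * (a^2 + t^2) := by nlinarith [hkey]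
    _ = (lamU + ε) * ‖x‖^2 := by rw [hnorm]

end Main

/-- Lemma 4.3: for `ξ_s := ξ - s·1_{D∖U}`, the map `s ↦ λ_D^{(k)}(ξ_s)`
is (a) non-increasing on `[0,∞)`, (b) 1-Lipschitz on `[0,∞)`, and (c) converges to
`λ_U^{(k)}(ξ)` as `s → ∞`. -/
theorem eigenvalue_shift {d : ℕ} (hd : 0 < d)
    (D U : Finset (Site d)) (hU : U ⊆ D) (ξ : Site d → ℝ)
    (k : ℕ) (hk1 : 1 ≤ k) (hk2 : k ≤ U.card) :
    AntitoneOn (fun s : ℝ => lambdaK D (fun x => if x ∈ D \ U then ξ x - s else ξ x) k)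
        (Set.Ici (0 : ℝ)) ∧
      LipschitzOnWith 1
        (fun s : ℝ => lambdaK D (fun x => if x ∈ D \ U then ξ x - s else ξ x) k)
        (Set.Ici (0 : ℝ)) ∧
      Filter.Tendsto
        (fun s : ℝ => lambdaK D (fun x => if x ∈ D \ U then ξ x - s else ξ x) k)
        Filter.atTop (nhds (lambdaK U ξ k)) := by
  classical
  have hcardUD : U.card ≤ D.card := Finset.card_le_card hU
  have hkD : k - 1 < Fintype.card ↥D := by
    rw [Fintype.card_coe]; omega
  have hkU : k - 1 < Fintype.card ↥U := by
    rw [Fintype.card_coe]; omega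
  set kD : Fin (Fintype.card ↥D) := ⟨k - 1, hkD⟩
  set kU : Fin (Fintype.card ↥U) := ⟨k - 1, hkU⟩
  have hfs : ∀ s : ℝ, lambdaK D (fun x => if x ∈ D \ U then ξ x - s else ξ x) k
      = sEig (matH_isHermitian D (fun x => if x ∈ D \ U then ξ x - s else ξ x)) kD :=
    fun s => lambdaK_eq_sEig D _ k hkD
  have hfU : lambdaK U ξ k = sEig (matH_isHermitian U ξ) kU := lambdaK_eq_sEig U ξ k hkU
  -- quadratic form shift identity
  have hqd : ∀ s t : ℝ, ∀ x : EuclideanSpace ℝ ↥D,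
      qf (matH D (fun z => if z ∈ D \ U then ξ z - t else ξ z)) x
        = qf (matH D (fun z => if z ∈ D \ U then ξ z - s else ξ z)) x + (s - t) * qOut U x := by
    intro s t x
    rw [qf_eq_sum, qf_eq_sum]
    have h1 := qf'_shift (U := U) (D := D) ξ t x
    have h2 := qf'_shift (U := U) (D := D) ξ s x
    unfold qf' at h1 h2
    rw [h1, h2]
    ring
  -- Weyl-type comparisons
  have hcomp : ∀ s t : ℝ, ∀ c : ℝ, (∀ x : EuclideanSpace ℝ ↥D, (s - t) * qOut U x ≤ c * ‖x‖^2) →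
      sEig (matH_isHermitian D (fun z => if z ∈ D \ U then ξ z - t else ξ z)) kD
        ≤ sEig (matH_isHermitian D (fun z => if z ∈ D \ U then ξ z - s else ξ z)) kD + c := by
    intro s t c hc
    exact weyl _ _ c (fun x => by rw [hqd s t x]; linarith [hc x]) (k - 1) hkD
  have hmono : ∀ s t : ℝ, s ≤ t →
      sEig (matH_isHermitian D (fun z => if z ∈ D \ U then ξ z - t else ξ z)) kD
        ≤ sEig (matH_isHermitian D (fun z => if z ∈ D \ U then ξ z - s else ξ z)) kD := by
    intro s t hst
    have := hcomp s t 0 (fun x => by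
      have h1 := qOut_nonneg (U := U) x
      nlinarith)
    linarith
  have hlip : ∀ s t : ℝ,
      sEig (matH_isHermitian D (fun z => if z ∈ D \ U then ξ z - t else ξ z)) kD
        ≤ sEig (matH_isHermitian D (fun z => if z ∈ D \ U then ξ z - s else ξ z)) kD
          + |s - t| := by
    intro s t
    refine hcomp s t |s - t| fun x => ?_
    have h1 := qOut_nonneg (U := U) x
    have h2 := qOut_le (U := U) x
    have h3 : s - t ≤ |s - t| := le_abs_self _
    have h4 : 0 ≤ |s - t| := abs_nonneg _
    nlinarith
  refine ⟨?_, ?_, ?_⟩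
  · -- Antitone
    intro s _ t _ hst
    simp only [hfs]
    exact hmono s t hst
  · -- Lipschitz
    refine LipschitzOnWith.of_dist_le_mul fun s _ t _ => ?_
    simp only [hfs, Real.dist_eq]
    rw [NNReal.coe_one, one_mul]
    have h1 := hlip s t
    have h2 := hlip t s
    rw [abs_sub_comm t s] at h2
    rw [abs_le]
    constructor <;> linarith
  · -- Tendsto
    rw [Metric.tendsto_atTop]
    intro ε hε
    obtain ⟨s₀, hs₀⟩ := eig_upper hU ξ hkD hkU (half_pos hε)
    refine ⟨s₀, fun s hs => ?_⟩
    have hup := hs₀ s hs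
    have hlo := eig_lower hU ξ s hkD hkU
    rw [Real.dist_eq, hfs, hfU, abs_lt]
    constructor
    · linarith
    · linarith [half_lt_self hε]

end RSO
end

section
/- Let C ⊂ Z^d be finite, ξ: C → R, and let ψ be an eigenfunction of H_{C,ξ} corresponding to the second largest eigenvalue λ_C^{(2)}(ξ). Let B := {x ∈ C : ψ(x) ≥ 0}. Then both B and C∖B are nonempty, and λ_C^{(2)}(ξ) ≤ min{λ_B^{(1)}(ξ), λ_{C∖B}^{(1)}(ξ)}, where λ_V^{(1)} denotes the largest Dirichlet eigenvalue in V. -/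
open scoped BigOperators
open MeasureTheory

namespace RSO

open Matrix in
/-- Rayleigh-quotient upper bound from a bound on all eigenvalues. -/
lemma quadform_le_of_eigen {n : Type*} [Fintype n] [DecidableEq n] {A : Matrix n n ℝ}
    (hA : A.IsHermitian) {μ : ℝ} (hμ : ∀ i, hA.eigenvalues i ≤ μ)
    (v : n → ℝ) : v ⬝ᵥ A.mulVec v ≤ μ * (v ⬝ᵥ v) := by
  classical
  set b := hA.eigenvectorBasis with hb
  set w : EuclideanSpace ℝ n := WithLp.toLp 2 v with hw
  set c : n → ℝ := fun i => b.repr w i with hc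
  have hv : w = ∑ i, c i • b i := (b.sum_repr w).symm
  have hAv : WithLp.toLp 2 (A.mulVec v) = ∑ i, (c i * hA.eigenvalues i) • b i := by
    have h1 : A.mulVec v = A.mulVec (∑ i, c i • ((b i : EuclideanSpace ℝ n) : n → ℝ)) := by
      have := congrArg WithLp.ofLp hv
      rw [WithLp.ofLp_sum] at this
      exact congrArg _ this
    have h2 : A.mulVec (∑ i : n, c i • ((b i : EuclideanSpace ℝ n) : n → ℝ))
        = ∑ i : n, c i • A.mulVec ((b i : EuclideanSpace ℝ n) : n → ℝ) := by
      rw [← Matrix.mulVecLin_apply, map_sum]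
      simp [Matrix.mulVecLin_apply, Matrix.mulVec_smul]
    rw [h1]
    refine Eq.trans (congrArg (WithLp.toLp 2) h2) ?_
    rw [WithLp.toLp_sum]
    refine Finset.sum_congr rfl fun i _ => ?_
    have h3 := hA.mulVec_eigenvectorBasis i
    rw [WithLp.toLp_smul, h3, WithLp.toLp_smul, WithLp.toLp_ofLp, smul_smul, mul_comm]
  have hinner1 : v ⬝ᵥ A.mulVec v = inner ℝ w (WithLp.toLp 2 (A.mulVec v)) := by
    simp [w, PiLp.inner_apply, dotProduct, RCLike.inner_apply, mul_comm]
  have hinner2 : v ⬝ᵥ v = inner ℝ w w := by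
    rw [hw, PiLp.inner_apply]
    simp [dotProduct, RCLike.inner_apply, sq]
  have h4 : (inner ℝ w (WithLp.toLp 2 (A.mulVec v)))
      = ∑ i, c i * (c i * hA.eigenvalues i) := by
    rw [hAv]
    nth_rewrite 1 [hv]
    rw [b.orthonormal.inner_sum]
    simp [starRingEnd_apply]
  have h5 : (inner ℝ w w : ℝ) = ∑ i, c i * c i := by
    nth_rewrite 1 [hv]
    nth_rewrite 1 [hv]
    rw [b.orthonormal.inner_sum]
    simp [starRingEnd_apply]
  rw [hinner1, hinner2, h4, h5, Finset.mul_sum]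
  refine Finset.sum_le_sum fun i _ => ?_
  nlinarith [hμ i, mul_self_nonneg (c i)]

/-- Any member of the descending-sorted list is at most its head. -/
lemma sorted_head_ge (l : List ℝ) (a : ℝ)
    (ha : a ∈ List.insertionSort (fun a b : ℝ => b ≤ a) l) :
    a ≤ (List.insertionSort (fun a b : ℝ => b ≤ a) l).getD 0 0 := by
  have hsort := List.pairwise_insertionSort (fun a b : ℝ => b ≤ a) l
  cases h : List.insertionSort (fun a b : ℝ => b ≤ a) l with
  | nil => rw [h] at ha; simp at ha
  | cons x t =>
    rw [h] at ha hsort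
    simp only [List.getD_cons_zero]
    rcases List.mem_cons.mp ha with rfl | hmem
    · exact le_refl a
    · exact (List.pairwise_cons.mp hsort).1 _ hmem

/-- Every eigenvalue of `matH D ξ` is at most `lambdaK D ξ 1`. -/
lemma eigen_le_lambda1 {d : ℕ} (D : Finset (Site d)) (ξ : Site d → ℝ) (i : {x // x ∈ D}) :
    (matH_isHermitian D ξ).eigenvalues i ≤ lambdaK D ξ 1 := by
  classical
  have hmem : (matH_isHermitian D ξ).eigenvalues i
      ∈ ((D.attach.val.map (matH_isHermitian D ξ).eigenvalues).toList) := by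
    rw [Multiset.mem_toList]
    exact Multiset.mem_map_of_mem _ (Finset.mem_val.mpr (Finset.mem_attach D i))
  have hmemS := (List.perm_insertionSort (fun a b : ℝ => b ≤ a) _).mem_iff.mpr hmem
  exact sorted_head_ge _ _ hmemS

open Matrix in
/-- Rayleigh bound: a lower bound on the quadratic form gives `lam ≤ λ₁`. -/
lemma lam_le_lambda1 {d : ℕ} (D : Finset (Site d)) (ξ : Site d → ℝ) (lam : ℝ)
    (v : {x // x ∈ D} → ℝ) (hv : v ≠ 0)
    (h : lam * (v ⬝ᵥ v) ≤ v ⬝ᵥ (matH D ξ).mulVec v) : lam ≤ lambdaK D ξ 1 := by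
  classical
  have hq := quadform_le_of_eigen (matH_isHermitian D ξ)
    (fun i => eigen_le_lambda1 D ξ i) v
  have hpos : 0 < v ⬝ᵥ v := by
    obtain ⟨x, hx⟩ := Function.ne_iff.mp hv
    exact Finset.sum_pos' (fun i _ => mul_self_nonneg (v i))
      ⟨x, Finset.mem_univ x, mul_self_pos.mpr hx⟩
  nlinarith

open Matrix in
lemma mulVec_matH {d : ℕ} (D : Finset (Site d)) (ξ : Site d → ℝ) (g : Site d → ℝ)
    (x : {z // z ∈ D}) :
    (matH D ξ).mulVec (fun y : {z // z ∈ D} => g y) x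
      = (∑ y ∈ D.filter (fun y => dist1 (x : Site d) y = 1), g y)
        + (ξ (x : Site d) - 2 * d) * g (x : Site d) := by
  classical
  unfold Matrix.mulVec matH dotProduct
  simp only [add_mul, ite_mul, one_mul, zero_mul]
  rw [Finset.sum_add_distrib]
  congr 1
  · rw [Finset.sum_filter, ← Finset.sum_coe_sort D (fun y => if dist1 (x : Site d) y = 1 then g y else 0)]
  · simp

open Matrix in
/-- Key bound: if `lam * g ≤ H_D g` pointwise on `D` with `g ≥ 0` on `D` and `g` not
identically zero on `D`, then `lam ≤ λ₁(D)`. -/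
lemma key_bound {d : ℕ} (D : Finset (Site d)) (ξ : Site d → ℝ) (lam : ℝ) (g : Site d → ℝ)
    (hg0 : ∀ x ∈ D, 0 ≤ g x) (hx : ∃ x ∈ D, g x ≠ 0)
    (hineq : ∀ x ∈ D, lam * g x
      ≤ (∑ y ∈ D.filter (fun y => dist1 x y = 1), g y) + (ξ x - 2 * d) * g x) :
    lam ≤ lambdaK D ξ 1 := by
  classical
  set v : {z // z ∈ D} → ℝ := fun x => g x with hv
  have hvne : v ≠ 0 := by
    obtain ⟨x, hxD, hxne⟩ := hx
    intro h0
    exact hxne (by simpa [hv] using congrFun h0 ⟨x, hxD⟩)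
  apply lam_le_lambda1 D ξ lam v hvne
  have hterm : ∀ x : {z // z ∈ D}, lam * (v x * v x) ≤ v x * (matH D ξ).mulVec v x := by
    intro x
    rw [show (matH D ξ).mulVec v x
        = (∑ y ∈ D.filter (fun y => dist1 (x : Site d) y = 1), g y)
          + (ξ (x : Site d) - 2 * d) * g (x : Site d) from mulVec_matH D ξ g x]
    have h1 := hineq x x.2
    have h2 := hg0 x x.2
    have : v x = g (x : Site d) := rfl
    rw [this]
    nlinarith
  calc lam * (v ⬝ᵥ v) = ∑ x : {z // z ∈ D}, lam * (v x * v x) := by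
        rw [dotProduct, Finset.mul_sum]
    _ ≤ ∑ x : {z // z ∈ D}, v x * (matH D ξ).mulVec v x :=
        Finset.sum_le_sum fun x _ => hterm x
    _ = v ⬝ᵥ (matH D ξ).mulVec v := rfl

open Classical in
/-- nodal-domain bound for the second eigenvalue: if `ψ` is an
eigenfunction for the second largest Dirichlet eigenvalue of `Δ+ξ` on `C`, orthogonal to a
(strictly positive on `C`) principal eigenfunction, and `B := {x ∈ C : ψ(x) ≥ 0}`, then
`B` and `C ∖ B` are nonempty and `λ_C^{(2)}(ξ) ≤ min{λ_B^{(1)}(ξ), λ_{C∖B}^{(1)}(ξ)}`. -/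
theorem second_eigenvalue_nodal {d : ℕ} (hd : 0 < d)
    (C : Finset (Site d)) (ξ : Site d → ℝ) (ψ φ : Site d → ℝ)
    (hψ : IsEigen C ξ (lambdaK C ξ 2) ψ)
    (hφ : IsEigen C ξ (lambdaK C ξ 1) φ)
    (hφpos : ∀ x ∈ C, 0 < φ x)
    (horth : ∑ x ∈ C, φ x * ψ x = 0) :
    (C.filter (fun x => 0 ≤ ψ x)).Nonempty ∧
      (C \ C.filter (fun x => 0 ≤ ψ x)).Nonempty ∧
      lambdaK C ξ 2 ≤
        min (lambdaK (C.filter (fun x => 0 ≤ ψ x)) ξ 1)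
          (lambdaK (C \ C.filter (fun x => 0 ≤ ψ x)) ξ 1) := by
  classical
  obtain ⟨hψ0, hψne, hψeig⟩ := hψ
  set lam := lambdaK C ξ 2 with hlam
  -- some x₀ ∈ C with ψ x₀ ≠ 0
  have hex0 : ∃ x ∈ C, ψ x ≠ 0 := by
    by_contra h2
    push_neg at h2
    apply hψne
    funext x
    by_cases hxC : x ∈ C
    · exact h2 x hxC
    · exact hψ0 x hxC
  -- ψ takes a positive value on C
  have hex_pos : ∃ x ∈ C, 0 < ψ x := by
    by_contra h
    push_neg at h
    obtain ⟨x₀, hx₀C, hx₀⟩ := hex0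
    have hlt : ∑ x ∈ C, φ x * ψ x < ∑ x ∈ C, (0 : ℝ) := by
      refine Finset.sum_lt_sum (fun i hi => mul_nonpos_of_nonneg_of_nonpos
        (le_of_lt (hφpos i hi)) (h i hi)) ⟨x₀, hx₀C, ?_⟩
      have : ψ x₀ < 0 := lt_of_le_of_ne (h x₀ hx₀C) hx₀
      exact mul_neg_of_pos_of_neg (hφpos x₀ hx₀C) this
    rw [horth] at hlt
    simp at hlt
  -- ψ takes a negative value on C
  have hex_neg : ∃ x ∈ C, ψ x < 0 := by
    by_contra h
    push_neg at h
    obtain ⟨x₀, hx₀C, hx₀⟩ := hex0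
    have hlt : ∑ x ∈ C, (0 : ℝ) < ∑ x ∈ C, φ x * ψ x := by
      refine Finset.sum_lt_sum (fun i hi => mul_nonneg
        (le_of_lt (hφpos i hi)) (h i hi)) ⟨x₀, hx₀C, ?_⟩
      have : 0 < ψ x₀ := lt_of_le_of_ne (h x₀ hx₀C) (Ne.symm hx₀)
      exact mul_pos (hφpos x₀ hx₀C) this
    rw [horth] at hlt
    simp at hlt
  obtain ⟨xp, hxpC, hxp⟩ := hex_pos
  obtain ⟨xn, hxnC, hxn⟩ := hex_neg
  have hBne : (C.filter (fun x => 0 ≤ ψ x)).Nonempty :=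
    ⟨xp, Finset.mem_filter.mpr ⟨hxpC, le_of_lt hxp⟩⟩
  have hCBne : (C \ C.filter (fun x => 0 ≤ ψ x)).Nonempty := by
    refine ⟨xn, Finset.mem_sdiff.mpr ⟨hxnC, ?_⟩⟩
    intro hmem
    exact absurd (Finset.mem_filter.mp hmem).2 (not_le.mpr hxn)
  refine ⟨hBne, hCBne, le_min ?_ ?_⟩
  · -- bound on B
    apply key_bound _ ξ lam ψ
    · intro x hx; exact (Finset.mem_filter.mp hx).2
    · exact ⟨xp, Finset.mem_filter.mpr ⟨hxpC, le_of_lt hxp⟩, ne_of_gt hxp⟩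
    · intro x hx
      obtain ⟨hxC, hxpos⟩ := Finset.mem_filter.mp hx
      have heq := hψeig x hxC
      unfold hamApply at heq
      have hsplit := (Finset.sum_filter_add_sum_filter_not
        (C.filter (fun y => dist1 x y = 1)) (fun y => 0 ≤ ψ y) ψ).symm
      have hBadj : (C.filter (fun y => dist1 x y = 1)).filter (fun y => 0 ≤ ψ y)
          = (C.filter (fun x => 0 ≤ ψ x)).filter (fun y => dist1 x y = 1) :=
        Finset.filter_comm _ _ _
      have hneg : ∑ y ∈ (C.filter (fun y => dist1 x y = 1)).filter (fun y => ¬ 0 ≤ ψ y), ψ y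
          ≤ 0 :=
        Finset.sum_nonpos fun y hy =>
          le_of_not_ge (Finset.mem_filter.mp hy).2
      rw [hBadj] at hsplit
      linarith
  · -- bound on C \ B
    apply key_bound _ ξ lam (fun x => -ψ x)
    · intro x hx
      have := (Finset.mem_sdiff.mp hx).2
      have h2 : ¬ 0 ≤ ψ x := fun hc =>
        this (Finset.mem_filter.mpr ⟨(Finset.mem_sdiff.mp hx).1, hc⟩)
      linarith [lt_of_not_ge h2]
    · refine ⟨xn, Finset.mem_sdiff.mpr ⟨hxnC, ?_⟩, by simpa using ne_of_lt hxn⟩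
      intro hmem
      exact absurd (Finset.mem_filter.mp hmem).2 (not_le.mpr hxn)
    · intro x hx
      obtain ⟨hxC, hxB⟩ := Finset.mem_sdiff.mp hx
      have heq := hψeig x hxC
      unfold hamApply at heq
      have hsplit := (Finset.sum_filter_add_sum_filter_not
        (C.filter (fun y => dist1 x y = 1)) (fun y => 0 ≤ ψ y) ψ).symm
      have hCB : C \ C.filter (fun x => 0 ≤ ψ x) = C.filter (fun x => ¬ 0 ≤ ψ x) :=
        (Finset.filter_not _ _).symm
      have hCBadj : (C.filter (fun y => dist1 x y = 1)).filter (fun y => ¬ 0 ≤ ψ y)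
          = (C \ C.filter (fun x => 0 ≤ ψ x)).filter (fun y => dist1 x y = 1) := by
        rw [hCB]
        exact Finset.filter_comm _ _ _
      have hpos : 0 ≤ ∑ y ∈ (C.filter (fun y => dist1 x y = 1)).filter (fun y => 0 ≤ ψ y), ψ y :=
        Finset.sum_nonneg fun y hy => (Finset.mem_filter.mp hy).2
      rw [hCBadj] at hsplit
      have hsumneg : ∑ y ∈ (C \ C.filter (fun x => 0 ≤ ψ x)).filter (fun y => dist1 x y = 1),
          (fun x => -ψ x) y
          = -∑ y ∈ (C \ C.filter (fun x => 0 ≤ ψ x)).filter (fun y => dist1 x y = 1), ψ y := by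
        rw [← Finset.sum_neg_distrib]
      simp only [hsumneg]
      linarith

end RSO
end

section
/- Fix ρ > 0. For finite C ⊂ Z^d, define L_C(φ) := Σ_{x∈C} e^{φ(x)/ρ} and χ_C := -sup{λ_C^{(1)}(φ) : φ ∈ R^{Z^d}, L_C(φ) ≤ 1}. If ξ: C → R satisfies λ_C^{(1)}(ξ) - λ_C^{(2)}(ξ) ≤ K for some K ≥ 0, then λ_C^{(1)}(ξ) - ρ log L_C(ξ) ≤ -χ_C + K - ρ log 2. -/
open scoped BigOperators
open MeasureTheory

namespace RSO

/-- The large-deviation functional `L_C(φ) = Σ_{x∈C} e^{φ(x)/ρ}`. -/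
noncomputable def LC {d : ℕ} (ρ : ℝ) (C : Finset (Site d)) (φ : Site d → ℝ) : ℝ :=
  ∑ x ∈ C, Real.exp (φ x / ρ)

/-- `χ_C := -sup{λ_C^{(1)}(φ) : L_C(φ) ≤ 1}`. -/
noncomputable def chi {d : ℕ} (ρ : ℝ) (C : Finset (Site d)) : ℝ :=
  -sSup ((fun φ : Site d → ℝ => lambdaK C φ 1) '' {φ : Site d → ℝ | LC ρ C φ ≤ 1})

section Sorted
variable {d : ℕ} (D : Finset (Site d)) (ξ : Site d → ℝ)

local instance : IsTotal ℝ (fun a b : ℝ => b ≤ a) := ⟨fun a b => le_total b a⟩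
local instance : IsTrans ℝ (fun a b : ℝ => b ≤ a) := ⟨fun _ _ _ h1 h2 => le_trans h2 h1⟩

lemma exists_sorted_rep :
    ∃ l : List ℝ, l.Pairwise (fun a b : ℝ => b ≤ a) ∧
      (l : Multiset ℝ) = D.attach.val.map (matH_isHermitian D ξ).eigenvalues ∧
      lambdaK D ξ 1 = l.getD 0 0 ∧ lambdaK D ξ 2 = l.getD 1 0 ∧
      l.length = D.card := by
  refine ⟨List.insertionSort (fun a b : ℝ => b ≤ a)
      ((D.attach.val.map (matH_isHermitian D ξ).eigenvalues).toList),
    List.pairwise_insertionSort _ _, ?_, rfl, rfl, ?_⟩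
  · rw [Multiset.coe_eq_coe.mpr (List.perm_insertionSort _ _), Multiset.coe_toList]
  · rw [List.length_insertionSort, Multiset.length_toList, Multiset.card_map]
    exact Finset.card_attach

lemma lambdaK_one_spec (hD : D.Nonempty) :
    (∃ i : {x // x ∈ D}, (matH_isHermitian D ξ).eigenvalues i = lambdaK D ξ 1) ∧
      ∀ i : {x // x ∈ D}, (matH_isHermitian D ξ).eigenvalues i ≤ lambdaK D ξ 1 := by
  obtain ⟨l, hsort, hcoe, hK1, _, hlen⟩ := exists_sorted_rep D ξ
  obtain ⟨a, t, rfl⟩ : ∃ a t, l = a :: t := by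
    cases l with
    | nil => exfalso; have := Finset.card_pos.mpr hD; simp at hlen; omega
    | cons a t => exact ⟨a, t, rfl⟩
  have h1 : lambdaK D ξ 1 = a := hK1
  constructor
  · have ha : a ∈ Multiset.map (matH_isHermitian D ξ).eigenvalues D.attach.val := by
      rw [← hcoe]; exact List.mem_cons_self
    obtain ⟨i, _, hi⟩ := Multiset.mem_map.mp ha
    exact ⟨i, by rw [hi, h1]⟩
  · intro i
    have hi : (matH_isHermitian D ξ).eigenvalues i ∈ ((a :: t : List ℝ) : Multiset ℝ) := by
      rw [hcoe]
      exact Multiset.mem_map_of_mem _ (Finset.mem_attach D i)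
    rw [h1]
    rcases List.mem_cons.mp hi with h | h
    · exact le_of_eq h
    · exact List.rel_of_pairwise_cons hsort h

lemma lambdaK_pair_spec (h2 : 2 ≤ D.card) :
    ∃ i j : {x // x ∈ D}, i ≠ j ∧
      (matH_isHermitian D ξ).eigenvalues i = lambdaK D ξ 1 ∧
      (matH_isHermitian D ξ).eigenvalues j = lambdaK D ξ 2 ∧
      lambdaK D ξ 2 ≤ lambdaK D ξ 1 := by
  obtain ⟨l, hsort, hcoe, hK1, hK2, hlen⟩ := exists_sorted_rep D ξ
  obtain ⟨a, b, t, rfl⟩ : ∃ a b t, l = a :: b :: t := by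
    cases l with
    | nil => simp at hlen; omega
    | cons a t =>
      cases t with
      | nil => simp at hlen; omega
      | cons b t => exact ⟨a, b, t, rfl⟩
  have h1 : lambdaK D ξ 1 = a := hK1
  have h2' : lambdaK D ξ 2 = b := hK2
  have hba : b ≤ a := List.rel_of_pairwise_cons hsort List.mem_cons_self
  have ha : a ∈ Multiset.map (matH_isHermitian D ξ).eigenvalues D.attach.val := by
    rw [← hcoe]; exact List.mem_cons_self
  obtain ⟨i, hiD, hi⟩ := Multiset.mem_map.mp ha
  obtain ⟨s, hs⟩ := Multiset.exists_cons_of_mem hiD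
  have hnodup : (i ::ₘ s).Nodup := by rw [← hs]; exact D.attach.nodup
  have hb : b ∈ Multiset.map (matH_isHermitian D ξ).eigenvalues s := by
    have he : (Multiset.map (matH_isHermitian D ξ).eigenvalues D.attach.val).erase a
        = (b ::ₘ ↑t : Multiset ℝ) := by
      rw [← hcoe]
      show ((a ::ₘ (b ::ₘ ↑t)) : Multiset ℝ).erase a = _
      exact Multiset.erase_cons_head a _
    have hb' : b ∈ (Multiset.map (matH_isHermitian D ξ).eigenvalues D.attach.val).erase a := by
      rw [he]; exact Multiset.mem_cons_self _ _
    rwa [hs, Multiset.map_cons, ← hi, Multiset.erase_cons_head] at hb'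
  obtain ⟨j, hjs, hj⟩ := Multiset.mem_map.mp hb
  refine ⟨i, j, ?_, by rw [hi, h1], by rw [hj, h2'], by rw [h1, h2']; exact hba⟩
  rintro rfl
  exact (Multiset.nodup_cons.mp hnodup).1 hjs

end Sorted

noncomputable def quadF {d : ℕ} (D : Finset (Site d)) (ξ : Site d → ℝ)
    (ψ : Site d → ℝ) : ℝ := ∑ x ∈ D, ψ x * hamApply D ξ ψ x

section Quad
variable {d : ℕ} {B D : Finset (Site d)} {ξ : Site d → ℝ} {ψ : Site d → ℝ}

lemma sum_restrict {f : Site d → ℝ} (hBD : B ⊆ D) (hsupp : ∀ x ∉ B, f x = 0) :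
    ∑ x ∈ D, f x = ∑ x ∈ B, f x :=
  (Finset.sum_subset hBD fun x _ hx => hsupp x hx).symm

lemma hamApply_restrict (hBD : B ⊆ D) (hsupp : ∀ x ∉ B, ψ x = 0) (x : Site d) :
    hamApply D ξ ψ x = hamApply B ξ ψ x := by
  unfold hamApply
  congr 1
  refine (Finset.sum_subset (Finset.filter_subset_filter _ hBD) ?_).symm
  intro y hy hyB
  refine hsupp y fun hB => hyB (Finset.mem_filter.mpr ⟨hB, (Finset.mem_filter.mp hy).2⟩)

lemma quadF_restrict (hBD : B ⊆ D) (hsupp : ∀ x ∉ B, ψ x = 0) :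
    quadF D ξ ψ = quadF B ξ ψ := by
  unfold quadF
  rw [sum_restrict hBD (fun x hx => by rw [hsupp x hx, zero_mul])]
  exact Finset.sum_congr rfl fun x _ => by rw [hamApply_restrict hBD hsupp]

lemma quadF_eigen {lam : ℝ} (heig : ∀ x ∈ D, hamApply D ξ ψ x = lam * ψ x) :
    quadF D ξ ψ = lam * ∑ x ∈ D, ψ x ^ 2 := by
  unfold quadF
  rw [Finset.mul_sum]
  exact Finset.sum_congr rfl fun x hx => by rw [heig x hx]; ring

lemma quadF_potential (ξ' : Site d → ℝ) :
    quadF D ξ' ψ = quadF D ξ ψ + ∑ x ∈ D, (ξ' x - ξ x) * ψ x ^ 2 := by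
  unfold quadF
  rw [← Finset.sum_add_distrib]
  refine Finset.sum_congr rfl fun x _ => ?_
  unfold hamApply; ring

noncomputable def extFun (D : Finset (Site d)) (v : {x // x ∈ D} → ℝ) : Site d → ℝ :=
  fun x => if h : x ∈ D then v ⟨x, h⟩ else 0

lemma extFun_coe (v : {x // x ∈ D} → ℝ) (y : {x // x ∈ D}) : extFun D v ↑y = v y := by
  simp [extFun]

lemma extFun_not_mem (v : {x // x ∈ D} → ℝ) {x : Site d} (hx : x ∉ D) :
    extFun D v x = 0 := dif_neg hx

lemma hamApply_extFun (ξ : Site d → ℝ) (v : {x // x ∈ D} → ℝ) (x : Site d) (hx : x ∈ D) :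
    hamApply D ξ (extFun D v) x = (Matrix.mulVec (matH D ξ) v) ⟨x, hx⟩ := by
  classical
  have hrhs : (Matrix.mulVec (matH D ξ) v) ⟨x, hx⟩
      = ∑ j : {y // y ∈ D}, ((if dist1 x ↑j = 1 then (1:ℝ) else 0)
          + (if (⟨x, hx⟩ : {y // y ∈ D}) = j then ξ x - 2*d else 0)) * v j := by
    simp [Matrix.mulVec, dotProduct, matH]
  rw [hrhs]
  simp only [add_mul, Finset.sum_add_distrib, ite_mul, one_mul, zero_mul]
  unfold hamApply
  congr 1
  · rw [Finset.sum_filter, ← Finset.sum_attach D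
      (fun y => if dist1 x y = 1 then extFun D v y else 0), Finset.univ_eq_attach]
    exact Finset.sum_congr rfl fun j _ => by rw [extFun_coe]
  · rw [Finset.sum_ite_eq]
    simp [extFun, hx]

end Quad

section AbstractRayleigh
set_option linter.unusedSectionVars false
variable {n : Type*} [Fintype n] [DecidableEq n]

lemma expand_aux (b : OrthonormalBasis n ℝ (EuclideanSpace ℝ n)) (v : n → ℝ) (y : n) :
    ∑ k : n, (∑ z : n, b k z * v z) * b k y = v y := by
  have h' := congrArg (fun w : EuclideanSpace ℝ n => w y) (b.sum_repr (WithLp.toLp 2 v))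
  simp only [WithLp.ofLp_sum, WithLp.ofLp_smul, Finset.sum_apply, Pi.smul_apply, smul_eq_mul] at h'
  rw [← h']
  refine Finset.sum_congr rfl fun k _ => ?_
  congr 1
  rw [b.repr_apply_apply]
  simp [PiLp.inner_apply, RCLike.inner_apply, starRingEnd_apply]
  exact Finset.sum_congr rfl fun _ _ => mul_comm _ _

lemma sym_aux (A : Matrix n n ℝ) (hA : A.IsHermitian) (u w : n → ℝ) :
    ∑ y : n, u y * (A.mulVec w) y = ∑ y : n, (A.mulVec u) y * w y := by
  have hs : ∀ p q : n, A p q = A q p := fun p q => by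
    conv_lhs => rw [← hA]
    simp [Matrix.conjTranspose_apply]
  simp only [Matrix.mulVec, dotProduct, Finset.mul_sum, Finset.sum_mul]
  rw [Finset.sum_comm]
  refine Finset.sum_congr rfl fun y _ => Finset.sum_congr rfl fun z _ => ?_
  rw [hs y z]; ring

lemma core_rayleigh (A : Matrix n n ℝ) (hA : A.IsHermitian) (lam : ℝ)
    (hlam : ∀ k, hA.eigenvalues k ≤ lam) (v : n → ℝ) :
    ∑ y : n, v y * (A.mulVec v) y ≤ lam * ∑ y : n, v y ^ 2 := by
  set b := hA.eigenvectorBasis with hb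
  set c : n → ℝ := fun k => ∑ z : n, b k z * v z with hc
  have key : ∀ w : n → ℝ, ∑ y : n, w y * v y = ∑ k : n, c k * (∑ y : n, b k y * w y) := by
    intro w
    calc ∑ y : n, w y * v y = ∑ y : n, (∑ k : n, c k * b k y) * w y := by
          refine Finset.sum_congr rfl fun y _ => ?_
          rw [expand_aux b v y]; ring
      _ = ∑ k : n, c k * (∑ y : n, b k y * w y) := by
          simp only [Finset.sum_mul, Finset.mul_sum]
          rw [Finset.sum_comm]
          exact Finset.sum_congr rfl fun k _ => Finset.sum_congr rfl fun y _ => by ring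
  have hAbk : ∀ k y, (A.mulVec (b k)) y = hA.eigenvalues k * b k y := by
    intro k y
    have := congrFun (hA.mulVec_eigenvectorBasis k) y
    simpa using this
  have hq : ∑ y : n, v y * (A.mulVec v) y = ∑ k : n, hA.eigenvalues k * c k ^ 2 := by
    calc ∑ y : n, v y * (A.mulVec v) y = ∑ y : n, (A.mulVec v) y * v y :=
          Finset.sum_congr rfl fun y _ => by ring
      _ = ∑ k : n, c k * (∑ y : n, b k y * (A.mulVec v) y) := key _
      _ = ∑ k : n, c k * (∑ y : n, (A.mulVec (b k)) y * v y) := by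
          refine Finset.sum_congr rfl fun k _ => ?_
          rw [sym_aux A hA]
      _ = ∑ k : n, hA.eigenvalues k * c k ^ 2 := by
          refine Finset.sum_congr rfl fun k _ => ?_
          simp only [hAbk]
          rw [show ∑ y : n, hA.eigenvalues k * b k y * v y
              = hA.eigenvalues k * ∑ y : n, b k y * v y by
            rw [Finset.mul_sum]; exact Finset.sum_congr rfl fun y _ => by ring]
          ring
  have hn : ∑ y : n, v y ^ 2 = ∑ k : n, c k ^ 2 := by
    calc ∑ y : n, v y ^ 2 = ∑ y : n, v y * v y :=
          Finset.sum_congr rfl fun y _ => by ring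
      _ = ∑ k : n, c k * (∑ y : n, b k y * v y) := key v
      _ = ∑ k : n, c k ^ 2 := Finset.sum_congr rfl fun k _ => by
          rw [show (∑ y : n, b k y * v y) = c k from rfl]; ring
  rw [hq, hn, Finset.mul_sum]
  exact Finset.sum_le_sum fun k _ => mul_le_mul_of_nonneg_right (hlam k) (sq_nonneg _)

lemma ortho_aux (b : OrthonormalBasis n ℝ (EuclideanSpace ℝ n)) (i j : n) :
    ∑ y : n, b i y * b j y = if i = j then 1 else 0 := by
  have h := b.orthonormal
  rw [orthonormal_iff_ite] at h
  have h' := h i j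
  simpa [PiLp.inner_apply, RCLike.inner_apply, starRingEnd_apply, mul_comm] using h'

end AbstractRayleigh

section SiteRayleigh
variable {d : ℕ} {B D : Finset (Site d)} {ξ ξ' : Site d → ℝ}

/-- Rayleigh bound: quadratic form of a function supported in `D` is at most the top
eigenvalue times the squared norm. -/
lemma rayleigh_le (hD : D.Nonempty) (ψ : Site d → ℝ) (hsupp : ∀ x ∉ D, ψ x = 0) :
    quadF D ξ ψ ≤ lambdaK D ξ 1 * ∑ x ∈ D, ψ x ^ 2 := by
  classical
  set v : {x // x ∈ D} → ℝ := fun y => ψ ↑y with hv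
  have hψ : ψ = extFun D v := by
    funext x
    by_cases h : x ∈ D
    · simp [extFun, h, hv]
    · rw [extFun_not_mem _ h, hsupp x h]
  have h1 : quadF D ξ ψ = ∑ y : {x // x ∈ D}, v y * ((matH D ξ).mulVec v) y := by
    rw [quadF, ← Finset.sum_attach D (fun x => ψ x * hamApply D ξ ψ x), Finset.univ_eq_attach]
    refine Finset.sum_congr rfl fun y _ => ?_
    have h2 : hamApply D ξ ψ ↑y = ((matH D ξ).mulVec v) y := by
      conv_lhs => rw [hψ]
      rw [hamApply_extFun ξ v ↑y y.2]
    rw [h2]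
  have h2 : ∑ x ∈ D, ψ x ^ 2 = ∑ y : {x // x ∈ D}, v y ^ 2 := by
    rw [← Finset.sum_attach D (fun x => ψ x ^ 2), Finset.univ_eq_attach]
  rw [h1, h2]
  exact core_rayleigh _ (matH_isHermitian D ξ) _ ((lambdaK_one_spec D ξ hD).2) v

/-- The eigenfunction associated to a basis index, extended by zero. -/
noncomputable def eigf (D : Finset (Site d)) (ξ : Site d → ℝ) (i : {x // x ∈ D}) :
    Site d → ℝ :=
  extFun D (fun y => (matH_isHermitian D ξ).eigenvectorBasis i y)

lemma eigf_supp (i : {x // x ∈ D}) : ∀ x ∉ D, eigf D ξ i x = 0 :=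
  fun _ hx => extFun_not_mem _ hx

lemma eigf_eigen (i : {x // x ∈ D}) (x : Site d) (hx : x ∈ D) :
    hamApply D ξ (eigf D ξ i) x = (matH_isHermitian D ξ).eigenvalues i * eigf D ξ i x := by
  rw [eigf, hamApply_extFun ξ _ x hx]
  have h := congrFun ((matH_isHermitian D ξ).mulVec_eigenvectorBasis i) (⟨x, hx⟩ : {y // y ∈ D})
  have h' : (Matrix.mulVec (matH D ξ) fun y => (matH_isHermitian D ξ).eigenvectorBasis i y) ⟨x, hx⟩
      = (matH_isHermitian D ξ).eigenvalues i * (matH_isHermitian D ξ).eigenvectorBasis i ⟨x, hx⟩ := by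
    simpa using h
  rw [h']
  congr 1
  simp [extFun, hx]

lemma eigf_prod_sum (i j : {x // x ∈ D}) :
    ∑ x ∈ D, eigf D ξ i x * eigf D ξ j x = if i = j then 1 else 0 := by
  rw [← Finset.sum_attach D (fun x => eigf D ξ i x * eigf D ξ j x)]
  rw [show (∑ y ∈ D.attach, eigf D ξ i ↑y * eigf D ξ j ↑y)
      = ∑ y ∈ D.attach, (matH_isHermitian D ξ).eigenvectorBasis i y
        * (matH_isHermitian D ξ).eigenvectorBasis j y from
    Finset.sum_congr rfl fun y _ => by rw [eigf, eigf, extFun_coe, extFun_coe]]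
  rw [← Finset.univ_eq_attach]
  exact ortho_aux _ i j

lemma eigf_sumsq (i : {x // x ∈ D}) : ∑ x ∈ D, eigf D ξ i x ^ 2 = 1 := by
  have h := eigf_prod_sum (ξ := ξ) i i
  simp only [if_true, eq_self_iff_true] at h
  rw [← h]
  exact Finset.sum_congr rfl fun x _ => by ring


lemma exists_top_eigenfun (ξ : Site d → ℝ) (hD : D.Nonempty) :
    ∃ ψ : Site d → ℝ, (∀ x ∉ D, ψ x = 0) ∧
      (∀ x ∈ D, hamApply D ξ ψ x = lambdaK D ξ 1 * ψ x) ∧ ∑ x ∈ D, ψ x ^ 2 = 1 := by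
  obtain ⟨⟨i, hi⟩, -⟩ := lambdaK_one_spec D ξ hD
  exact ⟨eigf D ξ i, eigf_supp i, fun x hx => by rw [eigf_eigen i x hx, hi], eigf_sumsq i⟩

lemma lam1_mono (ξ : Site d → ℝ) (hB : B.Nonempty) (hBD : B ⊆ D) :
    lambdaK B ξ 1 ≤ lambdaK D ξ 1 := by
  obtain ⟨ψ, hsupp, heig, hnorm⟩ := exists_top_eigenfun (D := B) ξ hB
  have hD : D.Nonempty := hB.mono hBD
  have hsuppD : ∀ x ∉ D, ψ x = 0 := fun x hx => hsupp x fun h => hx (hBD h)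
  have h1 : quadF D ξ ψ = lambdaK B ξ 1 := by
    rw [quadF_restrict hBD hsupp, quadF_eigen heig, hnorm, mul_one]
  have h2 := rayleigh_le (ξ := ξ) hD ψ hsuppD
  rw [h1, sum_restrict hBD (fun x hx => by rw [hsupp x hx]; ring), hnorm, mul_one] at h2
  exact h2

lemma lam1_le_of_le (hD : D.Nonempty) (h : ∀ x ∈ D, ξ x ≤ ξ' x) :
    lambdaK D ξ 1 ≤ lambdaK D ξ' 1 := by
  obtain ⟨ψ, hsupp, heig, hnorm⟩ := exists_top_eigenfun (D := D) ξ hD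
  have h1 : lambdaK D ξ 1 = quadF D ξ ψ := by rw [quadF_eigen heig, hnorm, mul_one]
  have h2 : quadF D ξ ψ ≤ quadF D ξ' ψ := by
    rw [quadF_potential (ξ := ξ) ξ']
    have h0 : (0:ℝ) ≤ ∑ x ∈ D, (ξ' x - ξ x) * ψ x ^ 2 :=
      Finset.sum_nonneg fun x hx => mul_nonneg (by linarith [h x hx]) (sq_nonneg _)
    linarith
  have h3 := rayleigh_le (ξ := ξ') hD ψ hsupp
  rw [hnorm, mul_one] at h3
  linarith

lemma lam1_shift_ge (hD : D.Nonempty) (c : ℝ) (h : ∀ x ∈ D, ξ' x = ξ x + c) :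
    lambdaK D ξ 1 + c ≤ lambdaK D ξ' 1 := by
  obtain ⟨ψ, hsupp, heig, hnorm⟩ := exists_top_eigenfun (D := D) ξ hD
  have h1 : lambdaK D ξ 1 = quadF D ξ ψ := by rw [quadF_eigen heig, hnorm, mul_one]
  have h2 : quadF D ξ' ψ = quadF D ξ ψ + c := by
    rw [quadF_potential (ξ := ξ) ξ']
    congr 1
    rw [show ∑ x ∈ D, (ξ' x - ξ x) * ψ x ^ 2 = ∑ x ∈ D, c * ψ x ^ 2 from
      Finset.sum_congr rfl fun x hx => by rw [h x hx]; ring]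
    rw [← Finset.mul_sum, hnorm, mul_one]
  have h3 := rayleigh_le (ξ := ξ') hD ψ hsupp
  rw [hnorm, mul_one] at h3
  linarith

/-- The key nodal-domain estimate. -/
lemma nodal {C : Finset (Site d)} (hBC : B ⊆ C) {lam : ℝ} {ψ : Site d → ℝ}
    (hsuppC : ∀ x ∉ C, ψ x = 0)
    (heig : ∀ x ∈ C, hamApply C ξ ψ x = lam * ψ x)
    (hcross : ∀ x ∈ B, ∀ y ∈ C, y ∉ B → dist1 x y = 1 → ψ x * ψ y ≤ 0)
    (hne : ∃ x ∈ B, ψ x ≠ 0) :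
    lam ≤ lambdaK B ξ 1 := by
  classical
  obtain ⟨x₀, hx₀B, hx₀⟩ := hne
  have hB : B.Nonempty := ⟨x₀, hx₀B⟩
  set f : Site d → ℝ := fun x => if x ∈ B then ψ x else 0 with hf
  have hfsupp : ∀ x ∉ B, f x = 0 := fun x hx => if_neg hx
  have hexp : quadF B ξ f
      = ∑ x ∈ B, ψ x * ((∑ y ∈ B.filter (fun y => dist1 x y = 1), ψ y)
          + (ξ x - 2*d) * ψ x) := by
    unfold quadF hamApply
    refine Finset.sum_congr rfl fun x hx => ?_
    have hfx : f x = ψ x := if_pos hx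
    rw [hfx]
    congr 1
    congr 1
    exact Finset.sum_congr rfl fun y hy => if_pos (Finset.mem_filter.mp hy).1
  have hlam : lam * ∑ x ∈ B, ψ x ^ 2
      = ∑ x ∈ B, ψ x * ((∑ y ∈ C.filter (fun y => dist1 x y = 1), ψ y)
          + (ξ x - 2*d) * ψ x) := by
    rw [Finset.mul_sum]
    refine Finset.sum_congr rfl fun x hx => ?_
    have h := heig x (hBC hx)
    unfold hamApply at h
    rw [h]; ring
  have hquad : lam * ∑ x ∈ B, ψ x ^ 2 ≤ quadF B ξ f := by
    rw [hlam, hexp]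
    refine Finset.sum_le_sum fun x hx => ?_
    have hsub : B.filter (fun y => dist1 x y = 1) ⊆ C.filter (fun y => dist1 x y = 1) :=
      Finset.filter_subset_filter _ hBC
    have hsplit := Finset.sum_sdiff (f := ψ) hsub
    have hneg : ψ x * ∑ y ∈ C.filter (fun y => dist1 x y = 1)
        \ B.filter (fun y => dist1 x y = 1), ψ y ≤ 0 := by
      rw [Finset.mul_sum]
      refine Finset.sum_nonpos fun y hy => ?_
      obtain ⟨hyC, hyB⟩ := Finset.mem_sdiff.mp hy
      have hyC' : y ∈ C := (Finset.mem_filter.mp hyC).1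
      have hP : dist1 x y = 1 := (Finset.mem_filter.mp hyC).2
      have hyB' : y ∉ B := fun h => hyB (Finset.mem_filter.mpr ⟨h, hP⟩)
      exact hcross x hx y hyC' hyB' hP
    have heq : ψ x * ((∑ y ∈ C.filter (fun y => dist1 x y = 1), ψ y) + (ξ x - 2*d) * ψ x)
        = ψ x * ((∑ y ∈ B.filter (fun y => dist1 x y = 1), ψ y) + (ξ x - 2*d) * ψ x)
          + ψ x * ∑ y ∈ C.filter (fun y => dist1 x y = 1)
            \ B.filter (fun y => dist1 x y = 1), ψ y := by
      rw [← hsplit]; ring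
    linarith
  have hray := rayleigh_le (ξ := ξ) hB f hfsupp
  have hfsq : ∑ x ∈ B, f x ^ 2 = ∑ x ∈ B, ψ x ^ 2 :=
    Finset.sum_congr rfl fun x hx => by rw [hf]; simp [if_pos hx]
  rw [hfsq] at hray
  have hpos : 0 < ∑ x ∈ B, ψ x ^ 2 :=
    Finset.sum_pos' (fun x _ => sq_nonneg _) ⟨x₀, hx₀B, pow_two_pos_of_ne_zero hx₀⟩
  exact (mul_le_mul_iff_of_pos_right hpos).mp (le_trans hquad hray)

end SiteRayleigh

section Partition
variable {d : ℕ} {C : Finset (Site d)} {ξ : Site d → ℝ}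

lemma exists_eigen_pair (ξ : Site d → ℝ) (h2 : 2 ≤ C.card) :
    ∃ ψ φ : Site d → ℝ,
      (∀ x ∉ C, ψ x = 0) ∧ (∀ x ∉ C, φ x = 0) ∧
      (∀ x ∈ C, hamApply C ξ ψ x = lambdaK C ξ 2 * ψ x) ∧
      (∀ x ∈ C, hamApply C ξ φ x = lambdaK C ξ 1 * φ x) ∧
      (∑ x ∈ C, ψ x ^ 2 = 1) ∧ (∑ x ∈ C, φ x ^ 2 = 1) ∧
      (∑ x ∈ C, ψ x * φ x = 0) := by
  obtain ⟨i, j, hij, hi, hj, -⟩ := lambdaK_pair_spec C ξ h2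
  refine ⟨eigf C ξ j, eigf C ξ i, eigf_supp j, eigf_supp i,
    (fun x hx => by rw [eigf_eigen j x hx, hj]),
    (fun x hx => by rw [eigf_eigen i x hx, hi]), eigf_sumsq j, eigf_sumsq i, ?_⟩
  have h := eigf_prod_sum (ξ := ξ) j i
  rwa [if_neg hij.symm] at h

lemma hamApply_neg (D : Finset (Site d)) (χ : Site d → ℝ) (x : Site d) :
    hamApply D ξ (fun y => -χ y) x = -hamApply D ξ χ x := by
  unfold hamApply
  beta_reduce
  rw [Finset.sum_neg_distrib]
  ring

lemma exists_partition (ξ : Site d → ℝ) (h2 : 2 ≤ C.card) :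
    ∃ B : Finset (Site d), B ⊆ C ∧ B.Nonempty ∧ (C \ B).Nonempty ∧
      lambdaK C ξ 2 ≤ lambdaK B ξ 1 ∧ lambdaK C ξ 2 ≤ lambdaK (C \ B) ξ 1 := by
  classical
  obtain ⟨i0, j0, hij0, hi0, hj0, h21⟩ := lambdaK_pair_spec C ξ h2
  clear hij0 hi0 hj0
  obtain ⟨ψ, φ, hψs, hφs, hψe, hφe, hψn, hφn, horth⟩ := exists_eigen_pair ξ h2
  -- the two nodal instances
  have mainPos : ∀ (χ : Site d → ℝ) (lam : ℝ), (∀ x ∉ C, χ x = 0) →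
      (∀ x ∈ C, hamApply C ξ χ x = lam * χ x) → (∃ x ∈ C, 0 < χ x) →
      lam ≤ lambdaK (C.filter fun z => 0 < χ z) ξ 1 := by
    intro χ lam hs he ⟨x₁, hx₁C, hx₁⟩
    refine nodal (Finset.filter_subset _ _) hs he ?_ ⟨x₁, Finset.mem_filter.mpr ⟨hx₁C, hx₁⟩, ne_of_gt hx₁⟩
    intro x hx y hyC hyB _
    have hxpos : 0 < χ x := (Finset.mem_filter.mp hx).2
    have hyneg : χ y ≤ 0 := le_of_not_gt fun h => hyB (Finset.mem_filter.mpr ⟨hyC, h⟩)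
    exact mul_nonpos_of_nonneg_of_nonpos hxpos.le hyneg
  have mainNeg : ∀ (χ : Site d → ℝ) (lam : ℝ), (∀ x ∉ C, χ x = 0) →
      (∀ x ∈ C, hamApply C ξ χ x = lam * χ x) → (∃ x ∈ C, χ x < 0) →
      lam ≤ lambdaK (C.filter fun z => χ z < 0) ξ 1 := by
    intro χ lam hs he ⟨x₁, hx₁C, hx₁⟩
    refine nodal (Finset.filter_subset _ _) hs he ?_ ⟨x₁, Finset.mem_filter.mpr ⟨hx₁C, hx₁⟩, ne_of_lt hx₁⟩
    intro x hx y hyC hyB _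
    have hxneg : χ x < 0 := (Finset.mem_filter.mp hx).2
    have hypos : 0 ≤ χ y := le_of_not_gt fun h => hyB (Finset.mem_filter.mpr ⟨hyC, h⟩)
    exact mul_nonpos_of_nonpos_of_nonneg hxneg.le hypos
  -- sign normalization
  have hflip : ∀ (χ : Site d → ℝ) (lam : ℝ), (∀ x ∉ C, χ x = 0) →
      (∀ x ∈ C, hamApply C ξ χ x = lam * χ x) → (∑ x ∈ C, χ x ^ 2 = 1) →
      ∃ χ' : Site d → ℝ, (∀ x ∉ C, χ' x = 0) ∧ (∀ x ∈ C, hamApply C ξ χ' x = lam * χ' x) ∧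
        (∃ x ∈ C, 0 < χ' x) ∧ ((χ' = χ) ∨ (χ' = fun y => -χ y)) := by
    intro χ lam hs he hn
    have hnz : ∃ x ∈ C, χ x ≠ 0 := by
      by_contra h
      push_neg at h
      rw [Finset.sum_eq_zero (fun x hx => by rw [h x hx]; ring)] at hn
      norm_num at hn
    obtain ⟨x₀, hx₀C, hx₀⟩ := hnz
    rcases hx₀.lt_or_gt with h | h
    · refine ⟨fun y => -χ y, fun x hx => by show -χ x = 0; rw [hs x hx]; ring, ?_,
        ⟨x₀, hx₀C, by show (0:ℝ) < -χ x₀; linarith⟩, Or.inr rfl⟩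
      intro x hx
      show hamApply C ξ (fun y => -χ y) x = lam * -χ x
      rw [hamApply_neg, he x hx]; ring
    · exact ⟨χ, hs, he, ⟨x₀, hx₀C, h⟩, Or.inl rfl⟩
  obtain ⟨ψ', hψ's, hψ'e, hψ'pos, hψ'or⟩ := hflip ψ _ hψs hψe hψn
  have horthψ' : ∑ x ∈ C, ψ' x * φ x = 0 := by
    rcases hψ'or with rfl | rfl
    · exact horth
    · show ∑ x ∈ C, -ψ x * φ x = 0
      simp only [neg_mul, Finset.sum_neg_distrib]
      rw [horth, neg_zero]
  by_cases hψ'neg : ∃ y ∈ C, ψ' y < 0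
  · -- ψ' changes sign
    obtain ⟨x₁, hx₁C, hx₁⟩ := hψ'pos
    obtain ⟨y₁, hy₁C, hy₁⟩ := hψ'neg
    refine ⟨C.filter fun z => 0 < ψ' z, Finset.filter_subset _ _,
      ⟨x₁, Finset.mem_filter.mpr ⟨hx₁C, hx₁⟩⟩,
      ⟨y₁, Finset.mem_sdiff.mpr ⟨hy₁C, fun h => absurd (Finset.mem_filter.mp h).2 (by linarith)⟩⟩,
      mainPos ψ' _ hψ's hψ'e ⟨x₁, hx₁C, hx₁⟩, ?_⟩
    have hstep := mainNeg ψ' _ hψ's hψ'e ⟨y₁, hy₁C, hy₁⟩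
    refine le_trans hstep (lam1_mono ξ ⟨y₁, Finset.mem_filter.mpr ⟨hy₁C, hy₁⟩⟩ ?_)
    intro z hz
    obtain ⟨hzC, hzneg⟩ := Finset.mem_filter.mp hz
    exact Finset.mem_sdiff.mpr ⟨hzC, fun h => absurd (Finset.mem_filter.mp h).2 (by linarith)⟩
  · -- ψ' nonnegative on C
    push_neg at hψ'neg
    obtain ⟨φ', hφ's, hφ'e, hφ'pos, hφ'or⟩ := hflip φ _ hφs hφe hφn
    have horth' : ∑ x ∈ C, ψ' x * φ' x = 0 := by
      rcases hφ'or with rfl | rfl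
      · exact horthψ'
      · show ∑ x ∈ C, ψ' x * -φ x = 0
        simp only [mul_neg, Finset.sum_neg_distrib]
        rw [horthψ', neg_zero]
    by_cases hφ'neg : ∃ y ∈ C, φ' y < 0
    · -- φ' changes sign: use its nodal domains, top eigenvalue
      obtain ⟨x₁, hx₁C, hx₁⟩ := hφ'pos
      obtain ⟨y₁, hy₁C, hy₁⟩ := hφ'neg
      refine ⟨C.filter fun z => 0 < φ' z, Finset.filter_subset _ _,
        ⟨x₁, Finset.mem_filter.mpr ⟨hx₁C, hx₁⟩⟩,
        ⟨y₁, Finset.mem_sdiff.mpr ⟨hy₁C, fun h => absurd (Finset.mem_filter.mp h).2 (by linarith)⟩⟩,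
        le_trans h21 (mainPos φ' _ hφ's hφ'e ⟨x₁, hx₁C, hx₁⟩), ?_⟩
      have hstep := mainNeg φ' _ hφ's hφ'e ⟨y₁, hy₁C, hy₁⟩
      refine le_trans h21 (le_trans hstep
        (lam1_mono ξ ⟨y₁, Finset.mem_filter.mpr ⟨hy₁C, hy₁⟩⟩ ?_))
      intro z hz
      obtain ⟨hzC, hzneg⟩ := Finset.mem_filter.mp hz
      exact Finset.mem_sdiff.mpr ⟨hzC, fun h => absurd (Finset.mem_filter.mp h).2 (by linarith)⟩
    · -- both nonnegative: disjoint supports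
      push_neg at hφ'neg
      have hpt : ∀ x ∈ C, ψ' x * φ' x = 0 := by
        intro x hx
        have := (Finset.sum_eq_zero_iff_of_nonneg
          (fun y hy => mul_nonneg (hψ'neg y hy) (hφ'neg y hy))).mp horth'
        exact this x hx
      obtain ⟨x₁, hx₁C, hx₁⟩ := hψ'pos
      obtain ⟨y₁, hy₁C, hy₁⟩ := hφ'pos
      have hsub : (C.filter fun z => 0 < φ' z) ⊆ C \ (C.filter fun z => 0 < ψ' z) := by
        intro z hz
        obtain ⟨hzC, hzpos⟩ := Finset.mem_filter.mp hz
        refine Finset.mem_sdiff.mpr ⟨hzC, fun h => ?_⟩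
        have hψz : 0 < ψ' z := (Finset.mem_filter.mp h).2
        have := hpt z hzC
        nlinarith
      refine ⟨C.filter fun z => 0 < ψ' z, Finset.filter_subset _ _,
        ⟨x₁, Finset.mem_filter.mpr ⟨hx₁C, hx₁⟩⟩,
        ⟨y₁, hsub (Finset.mem_filter.mpr ⟨hy₁C, hy₁⟩)⟩,
        mainPos ψ' _ hψ's hψ'e ⟨x₁, hx₁C, hx₁⟩, ?_⟩
      refine le_trans h21 (le_trans (mainPos φ' _ hφ's hφ'e ⟨y₁, hy₁C, hy₁⟩)
        (lam1_mono ξ ⟨y₁, Finset.mem_filter.mpr ⟨hy₁C, hy₁⟩⟩ hsub))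

end Partition

/-- Proposition 2.2, spectral gap: if the gap between the two top
Dirichlet eigenvalues on `C` is at most `K`, then
`λ_C^{(1)}(ξ) - ρ log L_C(ξ) ≤ -χ_C + K - ρ log 2`. -/
theorem spectral_gap {d : ℕ} (hd : 0 < d) (ρ : ℝ) (hρ : 0 < ρ)
    (C : Finset (Site d)) (hC : 2 ≤ C.card) (ξ : Site d → ℝ)
    (K : ℝ) (hK : 0 ≤ K) (hgap : lambdaK C ξ 1 - lambdaK C ξ 2 ≤ K) :
    lambdaK C ξ 1 - ρ * Real.log (LC ρ C ξ) ≤ -chi ρ C + K - ρ * Real.log 2 := by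
  classical
  have hCne : C.Nonempty := Finset.card_pos.mp (by omega)
  have hLpos : 0 < LC ρ C ξ := Finset.sum_pos (fun x _ => Real.exp_pos _) hCne
  obtain ⟨B, hBC, hBne, hCBne, hB2, hCB2⟩ := exists_partition ξ hC
  have hsplit : LC ρ B ξ + LC ρ (C \ B) ξ = LC ρ C ξ := by
    rw [LC, LC, LC, add_comm]
    exact Finset.sum_sdiff hBC
  obtain ⟨B0, hB0C, hB0ne, hlam2, hsmall⟩ : ∃ B0 : Finset (Site d), B0 ⊆ C ∧ B0.Nonempty ∧
      lambdaK C ξ 2 ≤ lambdaK B0 ξ 1 ∧ 2 * LC ρ B0 ξ ≤ LC ρ C ξ := by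
    by_cases h : LC ρ B ξ ≤ LC ρ C ξ / 2
    · exact ⟨B, hBC, hBne, hB2, by linarith⟩
    · refine ⟨C \ B, Finset.sdiff_subset, hCBne, hCB2, by linarith⟩
  have hL0pos : 0 < LC ρ B0 ξ := Finset.sum_pos (fun x _ => Real.exp_pos _) hB0ne
  set S := ((fun φ : Site d → ℝ => lambdaK C φ 1) '' {φ : Site d → ℝ | LC ρ C φ ≤ 1}) with hS
  have hbdd : BddAbove S := by
    refine ⟨lambdaK C (fun _ => (0:ℝ)) 1, ?_⟩
    rintro y ⟨φ, hφ, rfl⟩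
    refine lam1_le_of_le hCne fun x hx => ?_
    have h1 : Real.exp (φ x / ρ) ≤ 1 := by
      have hle : Real.exp (φ x / ρ) ≤ LC ρ C φ :=
        Finset.single_le_sum (fun y _ => (Real.exp_pos (φ y / ρ)).le) hx
      exact le_trans hle hφ
    have h2 : φ x / ρ ≤ 0 := Real.exp_le_one_iff.mp h1
    calc φ x = (φ x / ρ) * ρ := (div_mul_cancel₀ _ (ne_of_gt hρ)).symm
      _ ≤ 0 := mul_nonpos_of_nonpos_of_nonneg h2 hρ.le
  have hkey : lambdaK B0 ξ 1 - ρ * Real.log (LC ρ B0 ξ) ≤ sSup S := by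
    refine le_of_forall_pos_le_add ?_
    intro ε hε
    set c : ℝ := -(ρ * Real.log (LC ρ B0 ξ)) - ε with hc
    set t : ℝ := ρ * Real.log ((1 - Real.exp (-ε / ρ)) / C.card) with ht
    set φε : Site d → ℝ := fun x => if x ∈ B0 then ξ x + c else t with hφε
    have hexpneg : Real.exp (-ε / ρ) < 1 := by
      rw [Real.exp_lt_one_iff]
      exact div_neg_of_neg_of_pos (by linarith) hρ
    have hcardpos : (0:ℝ) < (C.card : ℝ) := by
      have : 0 < C.card := by omega
      exact_mod_cast this
    have hfrac : 0 < (1 - Real.exp (-ε / ρ)) / (C.card : ℝ) :=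
      div_pos (by linarith) hcardpos
    have hmem : LC ρ C φε ≤ 1 := by
      rw [LC, ← Finset.sum_sdiff hB0C]
      have hB0sum : ∑ x ∈ B0, Real.exp (φε x / ρ) = Real.exp (-ε / ρ) := by
        have h1 : ∀ x ∈ B0, Real.exp (φε x / ρ)
            = Real.exp (ξ x / ρ) * (Real.exp (-ε / ρ) / LC ρ B0 ξ) := by
          intro x hx
          rw [hφε]
          simp only [if_pos hx]
          rw [show (ξ x + c) / ρ = ξ x / ρ + (-ε / ρ + -(Real.log (LC ρ B0 ξ))) by
            rw [hc]; field_simp; ring]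
          rw [Real.exp_add, Real.exp_add, Real.exp_neg, Real.exp_log hL0pos]
          ring
        rw [Finset.sum_congr rfl h1, ← Finset.sum_mul]
        rw [show (∑ x ∈ B0, Real.exp (ξ x / ρ)) = LC ρ B0 ξ from rfl]
        field_simp
      have hCBsum : ∑ x ∈ C \ B0, Real.exp (φε x / ρ) ≤ 1 - Real.exp (-ε / ρ) := by
        have h1 : ∀ x ∈ C \ B0, Real.exp (φε x / ρ) = (1 - Real.exp (-ε / ρ)) / (C.card : ℝ) := by
          intro x hx
          have hxB0 : x ∉ B0 := (Finset.mem_sdiff.mp hx).2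
          rw [hφε]
          simp only [if_neg hxB0]
          rw [ht, show ρ * Real.log ((1 - Real.exp (-ε / ρ)) / (C.card : ℝ)) / ρ
              = Real.log ((1 - Real.exp (-ε / ρ)) / (C.card : ℝ)) by field_simp]
          exact Real.exp_log hfrac
        rw [Finset.sum_congr rfl h1, Finset.sum_const, nsmul_eq_mul]
        have hcard : (C \ B0).card ≤ C.card := Finset.card_le_card Finset.sdiff_subset
        calc ((C \ B0).card : ℝ) * ((1 - Real.exp (-ε / ρ)) / (C.card : ℝ))
            ≤ (C.card : ℝ) * ((1 - Real.exp (-ε / ρ)) / (C.card : ℝ)) :=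
              mul_le_mul_of_nonneg_right (Nat.cast_le.mpr hcard) hfrac.le
          _ = 1 - Real.exp (-ε / ρ) := by field_simp
      linarith
    have hin : lambdaK C φε 1 ∈ S := ⟨φε, hmem, rfl⟩
    have hle1 : lambdaK B0 ξ 1 + c ≤ lambdaK B0 φε 1 :=
      lam1_shift_ge hB0ne c (fun x hx => by rw [hφε]; simp [if_pos hx])
    have hle2 : lambdaK B0 φε 1 ≤ lambdaK C φε 1 := lam1_mono φε hB0ne hB0C
    have hsup := le_csSup hbdd hin
    rw [hc] at hle1
    linarith
  have hlog : Real.log 2 + Real.log (LC ρ B0 ξ) ≤ Real.log (LC ρ C ξ) := by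
    rw [← Real.log_mul (by norm_num) (ne_of_gt hL0pos)]
    exact Real.log_le_log (by positivity) hsmall
  have h2' : ρ * Real.log 2 + ρ * Real.log (LC ρ B0 ξ) ≤ ρ * Real.log (LC ρ C ξ) := by
    have := mul_le_mul_of_nonneg_left hlog hρ.le
    rw [mul_add] at this
    linarith
  have hchi : -chi ρ C = sSup S := by rw [chi, neg_neg, hS]
  rw [show -chi ρ C + K - ρ * Real.log 2 = sSup S + K - ρ * Real.log 2 by rw [hchi]]
  linarith

end RSO
end

section
/- Let ξ(0) be a real random variable with esssup ξ(0) = ∞ such that F(r) := log log(P(ξ(0) > r)^{-1}) is continuously differentiable with F'(r) → 1/ρ ∈ (0,∞) as r → ∞. Then the law of ξ(0) has a probability density f(r) = F'(r)·P(ξ(0)>r)·(-log P(ξ(0)>r)) for large r, and f(r + s e^{-F(r)}) / f(r) → e^{-s/ρ} as r → ∞, locally uniformly in s ∈ R. -/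
set_option maxHeartbeats 1000000


open MeasureTheory

/-- Lemma 4.1(2): if `μ` is the law of a random variable with
`esssup = ∞` such that `F(r) := log log (P(ξ>r)⁻¹)` is continuously differentiable with
`F'(r) → 1/ρ`, then the law has the density
`f(r) = F'(r)·P(ξ>r)·(-log P(ξ>r))` for large `r`, and
`f(r + s e^{-F(r)})/f(r) → e^{-s/ρ}` locally uniformly in `s`. -/
theorem density_and_ratio_limit
    (ρ : ℝ) (hρ : 0 < ρ) (r₀ : ℝ)
    (μ : Measure ℝ) [IsProbabilityMeasure μ]
    (hpos : ∀ r : ℝ, 0 < (μ (Set.Ioi r)).toReal)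
    (hlt : ∀ r : ℝ, r₀ < r → (μ (Set.Ioi r)).toReal < 1)
    (F F' f : ℝ → ℝ)
    (hF : ∀ r : ℝ, F r = Real.log (Real.log (((μ (Set.Ioi r)).toReal)⁻¹)))
    (hf : ∀ r : ℝ, f r =
      F' r * (μ (Set.Ioi r)).toReal * (-Real.log ((μ (Set.Ioi r)).toReal)))
    (hderiv : ∀ r : ℝ, r₀ < r → HasDerivAt F (F' r) r)
    (hcont : ContinuousOn F' (Set.Ioi r₀))
    (hlim : Filter.Tendsto F' Filter.atTop (nhds (1 / ρ))) :
    (∀ a b : ℝ, r₀ < a → a ≤ b →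
        (μ (Set.Ioc a b)).toReal = ∫ r in a..b, f r) ∧
      ∀ K : Set ℝ, IsCompact K →
        TendstoUniformlyOn
          (fun (r : ℝ) (s : ℝ) => f (r + s * Real.exp (-F r)) / f r)
          (fun s => Real.exp (-s / ρ)) Filter.atTop K := by
  have hρne : ρ ≠ 0 := ne_of_gt hρ
  have hhalfρ : 1/(2*ρ) = 1/ρ/2 := by rw [div_div, mul_comm]
  have hρinvpos : 0 < 1/ρ := by positivity
  set G : ℝ → ℝ := fun r => (μ (Set.Ioi r)).toReal with hG
  -- basic facts
  have hGexp : ∀ r : ℝ, r₀ < r → G r = Real.exp (-(Real.exp (F r))) := by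
    intro r hr
    have h1 : 0 < G r := hpos r
    have h2 : G r < 1 := hlt r hr
    have hlog : Real.log (G r) < 0 := Real.log_neg h1 h2
    have heF : Real.exp (F r) = -Real.log (G r) := by
      rw [hF r, Real.log_inv]
      exact Real.exp_log (by linarith)
    rw [heF, neg_neg, Real.exp_log h1]
  have hfexp : ∀ r : ℝ, r₀ < r →
      f r = F' r * Real.exp (F r) * Real.exp (-(Real.exp (F r))) := by
    intro r hr
    have h1 : 0 < G r := hpos r
    have h2 : G r < 1 := hlt r hr
    have hlog : Real.log (G r) < 0 := Real.log_neg h1 h2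
    have heF : Real.exp (F r) = -Real.log (G r) := by
      rw [hF r, Real.log_inv]
      exact Real.exp_log (by linarith)
    rw [hf r, show Real.exp (-(Real.exp (F r))) = G r from (hGexp r hr).symm, heF]
    ring
  constructor
  · -- Part 1: density formula
    intro a b ha hab
    have hab' : ∀ x ∈ Set.Icc a b, r₀ < x := fun x hx => lt_of_lt_of_le ha hx.1
    have key : ∀ x ∈ Set.Icc a b,
        HasDerivAt (fun r => -Real.exp (-(Real.exp (F r)))) (f x) x := by
      intro x hx
      have hd := hderiv x (hab' x hx)
      have h1 : HasDerivAt (fun r => Real.exp (F r)) (Real.exp (F x) * F' x) x := hd.exp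
      have h2 := (h1.neg).exp.neg
      refine h2.congr_deriv ?_
      show -(Real.exp (-(Real.exp (F x))) * -(Real.exp (F x) * F' x)) = f x
      rw [hfexp x (hab' x hx)]
      ring
    have hFcont : ContinuousOn F (Set.Icc a b) := fun x hx =>
      ((hderiv x (hab' x hx)).continuousAt).continuousWithinAt
    have hfcont : ContinuousOn f (Set.Icc a b) := by
      have : ContinuousOn (fun r => F' r * Real.exp (F r) * Real.exp (-(Real.exp (F r))))
          (Set.Icc a b) := by
        have hF' : ContinuousOn F' (Set.Icc a b) :=
          hcont.mono (fun x hx => hab' x hx)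
        exact (hF'.mul (hFcont.rexp)).mul ((hFcont.rexp.neg).rexp)
      exact this.congr (fun x hx => hfexp x (hab' x hx))
    have hint : IntervalIntegrable f volume a b := by
      rw [intervalIntegrable_iff_integrableOn_Icc_of_le hab]
      exact hfcont.integrableOn_compact isCompact_Icc
    have hFTC := intervalIntegral.integral_eq_sub_of_hasDerivAt
      (fun x hx => key x (by rwa [Set.uIcc_of_le hab] at hx)) hint
    rw [hFTC]
    have hsplit : μ (Set.Ioi a) = μ (Set.Ioc a b) + μ (Set.Ioi b) := by
      rw [← measure_union _ measurableSet_Ioi, Set.Ioc_union_Ioi_eq_Ioi hab]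
      exact Set.Ioc_disjoint_Ioi le_rfl
    have hfin1 : μ (Set.Ioc a b) ≠ ⊤ := measure_ne_top μ _
    have hfin2 : μ (Set.Ioi b) ≠ ⊤ := measure_ne_top μ _
    have hGsum : G a = (μ (Set.Ioc a b)).toReal + G b := by
      rw [hG]; simp only; rw [hsplit, ENNReal.toReal_add hfin1 hfin2]
    have hb : r₀ < b := lt_of_lt_of_le ha hab
    have hval : (μ (Set.Ioc a b)).toReal = G a - G b := by linarith
    rw [hval, hGexp a ha, hGexp b hb]
    ring
  · -- Part 2: uniform convergence of the ratio
    -- Step A: F tends to infinity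
    have hFtop : Filter.Tendsto F Filter.atTop Filter.atTop := by
      have hhl : 1/(2*ρ) < 1/ρ := by rw [hhalfρ]; linarith
      obtain ⟨R, hR⟩ := Filter.eventually_atTop.1
        ((hlim.eventually (eventually_gt_nhds hhl)).and
          (Filter.eventually_gt_atTop r₀))
      have hRr₀ : r₀ < R := (hR R le_rfl).2
      have hmono := Convex.mul_sub_le_image_sub_of_le_deriv (convex_Ici R)
        (f := F) (C := 1/(2*ρ))
        (fun x hx => ((hderiv x (lt_of_lt_of_le hRr₀ hx)).continuousAt).continuousWithinAt)
        (by
          rw [interior_Ici]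
          exact fun x hx =>
            ((hderiv x (lt_trans hRr₀ hx)).differentiableAt).differentiableWithinAt)
        (by
          rw [interior_Ici]
          intro x hx
          rw [(hderiv x (lt_trans hRr₀ hx)).deriv]
          exact (hR x (le_of_lt hx)).1.le)
      apply Filter.tendsto_atTop_mono' Filter.atTop
        (f₁ := fun b => F R + 1/(2*ρ) * (b - R))
      · filter_upwards [Filter.eventually_ge_atTop R] with b hb
        have := hmono R Set.self_mem_Ici b hb hb
        linarith
      · apply Filter.tendsto_atTop_add_const_left
        apply Filter.Tendsto.const_mul_atTop (by positivity)
        have : Filter.Tendsto (fun b : ℝ => b + -R) Filter.atTop Filter.atTop :=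
          Filter.tendsto_atTop_add_const_right _ (-R) Filter.tendsto_id
        simpa [sub_eq_add_neg] using this
    have hexp0 : Filter.Tendsto (fun r => Real.exp (-F r)) Filter.atTop (nhds 0) :=
      Real.tendsto_exp_atBot.comp (Filter.tendsto_neg_atBot_iff.2 hFtop)
    intro K hK
    rw [Metric.tendstoUniformlyOn_iff]
    intro ε hε
    obtain ⟨M₀, hM₀⟩ := hK.isBounded.subset_closedBall 0
    set M : ℝ := max M₀ 0 with hMdef
    have hM0 : 0 ≤ M := le_max_right _ _
    have hM : ∀ s ∈ K, |s| ≤ M := by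
      intro s hs
      have h := hM₀ hs
      rw [Metric.mem_closedBall, Real.dist_eq, sub_zero] at h
      exact h.trans (le_max_left _ _)
    -- choose η
    set η : ℝ := min (1/2) (ε / (1 + 7 * Real.exp (M / ρ))) with hηdef
    have hden : 0 < 1 + 7 * Real.exp (M / ρ) := by positivity
    have hηpos : 0 < η := lt_min (by norm_num) (div_pos hε hden)
    have hηhalf : η ≤ 1/2 := min_le_left _ _
    have hηε : 7 * Real.exp (M / ρ) * η < ε := by
      have h1 : η ≤ ε / (1 + 7 * Real.exp (M / ρ)) := min_le_right _ _
      have h2 : 7 * Real.exp (M / ρ) * η ≤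
          7 * Real.exp (M / ρ) * (ε / (1 + 7 * Real.exp (M / ρ))) :=
        mul_le_mul_of_nonneg_left h1 (by positivity)
      have h3 : 7 * Real.exp (M / ρ) * (ε / (1 + 7 * Real.exp (M / ρ))) < ε := by
        rw [mul_div_assoc', div_lt_iff₀ hden]
        have := mul_pos (Real.exp_pos (M/ρ)) hε
        linarith
      linarith
    -- choose δ
    set δ : ℝ := min (1/(2*ρ)) (min (η/(4*ρ)) (η/(2*(M+1)))) with hδdef
    have hδpos : 0 < δ := lt_min (by positivity) (lt_min (by positivity) (by positivity))
    have hδ1 : δ ≤ 1/(2*ρ) := min_le_left _ _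
    have hδ2 : δ ≤ η/(4*ρ) := (min_le_right _ _).trans (min_le_left _ _)
    have hδ3 : δ ≤ η/(2*(M+1)) := (min_le_right _ _).trans (min_le_right _ _)
    have hMδ : M * δ ≤ η/2 := by
      have h1 : M * δ ≤ M * (η/(2*(M+1))) := mul_le_mul_of_nonneg_left hδ3 hM0
      have h2 : 2*(M+1) * (η/(2*(M+1))) = η := by field_simp
      have h3 : 0 ≤ η/(2*(M+1)) := div_nonneg hηpos.le (by positivity)
      linarith
    -- get R₁
    obtain ⟨R₁, hR₁⟩ := Filter.eventually_atTop.1 (by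
      have h1 : ∀ᶠ x in Filter.atTop, F' x ∈ Metric.closedBall (1/ρ) δ :=
        hlim (Metric.closedBall_mem_nhds _ hδpos)
      filter_upwards [h1, Filter.eventually_gt_atTop r₀] with x hx hx'
      exact ⟨by rwa [Metric.mem_closedBall, Real.dist_eq] at hx, hx'⟩ :
      ∀ᶠ x in Filter.atTop, |F' x - 1/ρ| ≤ δ ∧ r₀ < x)
    have hr₀R₁ : r₀ < R₁ := (hR₁ R₁ le_rfl).2
    have hF'lb : ∀ x, R₁ ≤ x → 1/(2*ρ) ≤ F' x := by
      intro x hx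
      have h := abs_le.1 (hR₁ x hx).1
      rw [hhalfρ]; linarith [hδ1, hhalfρ]
    have hF'ub : ∀ x, R₁ ≤ x → F' x ≤ 1/ρ + δ := by
      intro x hx
      have h := abs_le.1 (hR₁ x hx).1
      linarith
    -- constants
    set cM : ℝ := (1/ρ + 1/(2*ρ)) * M + 1 with hcMdef
    have hcMpos : 0 < cM := by positivity
    have hcM1 : 1 ≤ cM := by
      rw [hcMdef]
      nlinarith [mul_nonneg (by positivity : (0:ℝ) ≤ 1/ρ + 1/(2*ρ)) hM0]
    set c₀ : ℝ := min (1/(M+1)) (min ((min η 1)/cM) ((η/2)/cM^2)) with hc₀def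
    have hc₀pos : 0 < c₀ :=
      lt_min (by positivity) (lt_min (by positivity) (by positivity))
    -- main eventual statement
    filter_upwards [Filter.eventually_ge_atTop (R₁ + 1),
      hexp0.eventually (eventually_lt_nhds hc₀pos)] with r hrR hre
    intro s hs
    have hsM : |s| ≤ M := hM s hs
    set e : ℝ := Real.exp (-F r) with hedef
    have hepos : 0 < e := Real.exp_pos _
    set r' : ℝ := r + s * e with hr'def
    have hrR₁ : R₁ ≤ r := by linarith
    have hse : |s * e| ≤ M * e := by
      rw [abs_mul, abs_of_pos hepos]
      exact mul_le_mul_of_nonneg_right hsM hepos.le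
    have hec₀ : e < c₀ := hre
    have hMe1 : M * e ≤ 1 := by
      have h1 : e ≤ 1/(M+1) := le_of_lt (lt_of_lt_of_le hec₀ (min_le_left _ _))
      have h2 : M * e ≤ M * (1/(M+1)) := mul_le_mul_of_nonneg_left h1 hM0
      have h3 : (M+1) * (1/(M+1)) = 1 := by field_simp
      have h4 : 0 ≤ 1/(M+1) := by positivity
      linarith
    have habs_se := abs_le.1 hse
    have hr'R₁ : R₁ ≤ r' := by rw [hr'def]; linarith
    have hr₀r : r₀ < r := lt_of_lt_of_le hr₀R₁ hrR₁
    have hr₀r' : r₀ < r' := lt_of_lt_of_le hr₀R₁ hr'R₁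
    -- MVT
    have hmvt : ∃ c, R₁ ≤ c ∧ F r' - F r = F' c * (s * e) := by
      rcases lt_trichotomy (s * e) 0 with hneg | hzero | hposse
      · have hlt' : r' < r := by rw [hr'def]; linarith
        obtain ⟨c, hc, hceq⟩ := exists_hasDerivAt_eq_slope F F' hlt'
          (fun x hx => ((hderiv x (lt_of_lt_of_le hr₀r' hx.1)).continuousAt).continuousWithinAt)
          (fun x hx => hderiv x (lt_of_lt_of_le hr₀r' hx.1.le))
        refine ⟨c, le_trans hr'R₁ hc.1.le, ?_⟩
        have hne : r - r' ≠ 0 := by rw [hr'def]; intro h; linarith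
        have h2 : F' c * (r - r') = F r - F r' := by
          rw [hceq, div_mul_cancel₀ _ hne]
        have h3 : r - r' = -(s*e) := by rw [hr'def]; ring
        calc F r' - F r = -(F' c * (r - r')) := by rw [h2]; ring
          _ = F' c * (s * e) := by rw [h3]; ring
      · exact ⟨R₁, le_rfl, by rw [hr'def, hzero]; simp⟩
      · have hlt' : r < r' := by rw [hr'def]; linarith
        obtain ⟨c, hc, hceq⟩ := exists_hasDerivAt_eq_slope F F' hlt'
          (fun x hx => ((hderiv x (lt_of_lt_of_le hr₀r hx.1)).continuousAt).continuousWithinAt)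
          (fun x hx => hderiv x (lt_of_lt_of_le hr₀r hx.1.le))
        refine ⟨c, le_trans hrR₁ hc.1.le, ?_⟩
        have hne : r' - r ≠ 0 := by rw [hr'def]; intro h; linarith
        have h2 : F' c * (r' - r) = F r' - F r := by
          rw [hceq, div_mul_cancel₀ _ hne]
        have h3 : r' - r = s*e := by rw [hr'def]; ring
        rw [← h3]; linarith [h2]
    obtain ⟨c, hcR₁, hΔeq⟩ := hmvt
    set Δ : ℝ := F r' - F r with hΔdef
    have hF'c_ub : F' c ≤ 1/ρ + δ := hF'ub c hcR₁
    have hF'c_lb : 1/(2*ρ) ≤ F' c := hF'lb c hcR₁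
    have hF'cabs : |F' c| ≤ 1/ρ + δ := by
      rw [abs_of_pos (lt_of_lt_of_le (by positivity) hF'c_lb)]; exact hF'c_ub
    have hΔabs : |Δ| ≤ cM * e := by
      rw [hΔeq, abs_mul]
      have h1 : |F' c| * |s * e| ≤ (1/ρ + δ) * (M * e) :=
        mul_le_mul hF'cabs hse (abs_nonneg _) (by positivity)
      have h2 : (1/ρ + δ) * M ≤ cM := by
        rw [hcMdef]
        have := mul_le_mul_of_nonneg_right hδ1 hM0
        linarith
      have h3 := mul_le_mul_of_nonneg_right h2 hepos.le
      calc |F' c| * |s * e| ≤ (1/ρ + δ) * (M * e) := h1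
        _ = (1/ρ + δ) * M * e := by ring
        _ ≤ cM * e := h3
    have hcMe : cM * e ≤ min η 1 := by
      have h1 : e ≤ (min η 1)/cM :=
        le_of_lt (lt_of_lt_of_le hec₀ ((min_le_right _ _).trans (min_le_left _ _)))
      calc cM * e ≤ cM * ((min η 1)/cM) := mul_le_mul_of_nonneg_left h1 hcMpos.le
        _ = min η 1 := by field_simp
    have hΔη : |Δ| ≤ η := hΔabs.trans (hcMe.trans (min_le_left _ _))
    have hΔ1 : |Δ| ≤ 1 := hΔabs.trans (hcMe.trans (min_le_right _ _))
    set E : ℝ := Real.exp (F r) with hEdef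
    have hEpos : 0 < E := Real.exp_pos _
    have hEe : E * e = 1 := by rw [hEdef, hedef, ← Real.exp_add]; simp
    have hEΔ : E * Δ = s * F' c := by
      rw [hΔeq]
      calc E * (F' c * (s * e)) = (E * e) * (F' c * s) := by ring
        _ = s * F' c := by rw [hEe]; ring
    have hA1 : |E * Δ - s/ρ| ≤ η/2 := by
      have h1 : E * Δ - s/ρ = s * (F' c - 1/ρ) := by rw [hEΔ]; ring
      rw [h1, abs_mul]
      have h2 : |s| * |F' c - 1/ρ| ≤ M * δ :=
        mul_le_mul hsM (hR₁ c hcR₁).1 (abs_nonneg _) hM0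
      linarith
    have hA2 : |E * (Real.exp Δ - 1 - Δ)| ≤ η/2 := by
      rw [abs_mul, abs_of_pos hEpos]
      have h1 : |Real.exp Δ - 1 - Δ| ≤ Δ^2 := Real.abs_exp_sub_one_sub_id_le hΔ1
      have h2 : Δ^2 ≤ (cM*e)^2 := by
        rw [← sq_abs]
        exact pow_le_pow_left₀ (abs_nonneg _) hΔabs 2
      have h3 : E * (cM*e)^2 = cM^2 * e := by
        have : E * (cM*e)^2 = cM^2 * e * (E * e) := by ring
        rw [this, hEe, mul_one]
      have h4 : cM^2 * e ≤ η/2 := by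
        have h5 : e ≤ (η/2)/cM^2 :=
          le_of_lt (lt_of_lt_of_le hec₀ ((min_le_right _ _).trans (min_le_right _ _)))
        calc cM^2 * e ≤ cM^2 * ((η/2)/cM^2) :=
              mul_le_mul_of_nonneg_left h5 (by positivity)
          _ = η/2 := by field_simp
      calc E * |Real.exp Δ - 1 - Δ| ≤ E * Δ^2 :=
            mul_le_mul_of_nonneg_left h1 hEpos.le
        _ ≤ E * (cM*e)^2 := mul_le_mul_of_nonneg_left h2 hEpos.le
        _ = cM^2 * e := h3
        _ ≤ η/2 := h4
    have hA : |E * (Real.exp Δ - 1) - s/ρ| ≤ η := by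
      have h1 : E * (Real.exp Δ - 1) - s/ρ = E*(Real.exp Δ - 1 - Δ) + (E*Δ - s/ρ) := by ring
      rw [h1]
      calc |E*(Real.exp Δ - 1 - Δ) + (E*Δ - s/ρ)|
          ≤ |E*(Real.exp Δ - 1 - Δ)| + |E*Δ - s/ρ| := abs_add_le _ _
        _ ≤ η := by linarith
    set w : ℝ := Δ - E * (Real.exp Δ - 1) + s/ρ with hwdef
    have hw : |w| ≤ 2*η := by
      have h1 : w = Δ + -(E * (Real.exp Δ - 1) - s/ρ) := by rw [hwdef]; ring
      calc |w| = |Δ + -(E * (Real.exp Δ - 1) - s/ρ)| := by rw [h1]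
        _ ≤ |Δ| + |-(E * (Real.exp Δ - 1) - s/ρ)| := abs_add_le _ _
        _ = |Δ| + |E * (Real.exp Δ - 1) - s/ρ| := by rw [abs_neg]
        _ ≤ 2*η := by linarith
    have hwle1 : |w| ≤ 1 := by linarith
    -- q bound
    have hF'rpos : 0 < F' r := lt_of_lt_of_le (by positivity) (hF'lb r hrR₁)
    have hF'r'pos : 0 < F' r' := lt_of_lt_of_le (by positivity) (hF'lb r' hr'R₁)
    have hq : |F' r' / F' r - 1| ≤ η := by
      rw [div_sub_one (ne_of_gt hF'rpos), abs_div, abs_of_pos hF'rpos,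
        div_le_iff₀ hF'rpos]
      have h1 : |F' r' - F' r| ≤ 2*δ := by
        have a1 := abs_le.1 (hR₁ r' hr'R₁).1
        have a2 := abs_le.1 (hR₁ r hrR₁).1
        rw [abs_le]; constructor <;> linarith
      have h2 : 2*δ ≤ η * (1/(2*ρ)) := by
        have h3 : 2*(η/(4*ρ)) = η/(2*ρ) := by ring
        have h4 : η * (1/(2*ρ)) = η/(2*ρ) := by ring
        linarith
      have h5 : η * (1/(2*ρ)) ≤ η * F' r :=
        mul_le_mul_of_nonneg_left (hF'lb r hrR₁) hηpos.le
      linarith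
    -- ratio formula
    have hfr : f r = F' r * E * Real.exp (-E) := by
      rw [hfexp r hr₀r]
    have hfrpos : 0 < f r := by
      rw [hfr]; exact mul_pos (mul_pos hF'rpos hEpos) (Real.exp_pos _)
    have hFr'sum : F r + Δ = F r' := by rw [hΔdef]; ring
    have hXr' : Real.exp (F r') = E * Real.exp Δ := by
      rw [hEdef, ← Real.exp_add, hFr'sum]
    have hratio : f r' / f r = (F' r' / F' r) * (Real.exp w * Real.exp (-(s/ρ))) := by
      have h2 : Real.exp w * Real.exp (-(s/ρ)) =
          Real.exp Δ * (Real.exp (-(E * Real.exp Δ)) / Real.exp (-E)) := by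
        rw [← Real.exp_add, ← Real.exp_sub, ← Real.exp_add]
        congr 1
        rw [hwdef]; ring
      rw [hfexp r' hr₀r', hfr, hXr', h2]
      have hc1 : F' r ≠ 0 := ne_of_gt hF'rpos
      have hc2 : Real.exp (-E) ≠ 0 := Real.exp_ne_zero _
      have hc3 : E ≠ 0 := ne_of_gt hEpos
      field_simp
    have hsρ : -(s/ρ) = -s/ρ := by ring
    rw [Real.dist_eq, hratio]
    -- final estimate
    have hexpw : Real.exp w ≤ 3 := by
      have h1 : Real.exp w ≤ Real.exp 1 :=
        Real.exp_le_exp.2 ((le_abs_self _).trans hwle1)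
      have h2 : Real.exp 1 < 2.7182818286 := Real.exp_one_lt_d9
      linarith
    have hexpw1 : |Real.exp w - 1| ≤ 2*|w| := Real.abs_exp_sub_one_le hwle1
    have hesρ : Real.exp (-s/ρ) ≤ Real.exp (M/ρ) := by
      apply Real.exp_le_exp.2
      have h1 := abs_le.1 hsM
      rw [div_le_div_iff₀ hρ hρ]
      have h2 := mul_le_mul_of_nonneg_right (show -s ≤ M by linarith) hρ.le
      linarith
    calc |Real.exp (-s/ρ) - F' r' / F' r * (Real.exp w * Real.exp (-(s/ρ)))|
        = Real.exp (-(s/ρ)) * |1 - F' r' / F' r * Real.exp w| := by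
          have habs : |Real.exp (-(s/ρ)) * (1 - F' r' / F' r * Real.exp w)|
              = Real.exp (-(s/ρ)) * |1 - F' r' / F' r * Real.exp w| := by
            rw [abs_mul, abs_of_pos (Real.exp_pos _)]
          rw [← habs]
          congr 1
          ring
      _ ≤ Real.exp (M/ρ) * (7*η) := by
          apply mul_le_mul _ _ (abs_nonneg _) (Real.exp_pos _).le
          · rw [hsρ]; exact hesρ
          · calc |1 - F' r' / F' r * Real.exp w|
                = |(1 - Real.exp w) + Real.exp w * (1 - F' r' / F' r)| := by
                  congr 1; ring
              _ ≤ |1 - Real.exp w| + |Real.exp w * (1 - F' r' / F' r)| := abs_add_le _ _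
              _ ≤ 2*|w| + Real.exp w * |F' r' / F' r - 1| := by
                  rw [abs_mul, abs_of_pos (Real.exp_pos w), abs_sub_comm 1 (Real.exp w),
                    abs_sub_comm 1 (F' r' / F' r)]
                  linarith
              _ ≤ 2*(2*η) + 3*η := by
                  have := mul_le_mul hexpw hq (abs_nonneg _) (by norm_num)
                  linarith
              _ = 7*η := by ring
      _ < ε := by linarith
end
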